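/- arXiv:math/0611510 — 5 statements merged into one kernel-verified Lean document; each statement's English description precedes it below -/
import Mathlib

section
/- Let σ = (Z, P) be a stability condition on a triangulated category D. For every φ ∈ ℝ, the full additive subcategory P(φ) ⊆ D is an abelian category. -/
/-!
Basic definitions: Bridgeland stability conditions on a triangulated category.

The Grothendieck group `K(D)` is encoded implicitly: a group homomorphism `K(D) → ℂ`
is the same thing as a function on objects which is invariant under isomorphism and
additive on distinguished triangles.
-/

open CategoryTheory CategoryTheory.Limits CategoryTheory.Pretriangulated
open scoped ENNReal Classical

universe v u

variable (C : Type u) [Category.{v} C] [HasZeroObject C] [HasShift C ℤ]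
  [Preadditive C] [∀ n : ℤ, (CategoryTheory.shiftFunctor C n).Additive] [Pretriangulated C]

/-- A Harder–Narasimhan filtration of an object `E` with respect to a collection of
subcategories `P φ`: a finite sequence of triangles `E_{j-1} → E_j → A_j` with `E₀ = 0`,
`E_n = E`, and `A_j` a nonzero object of `P φ_j`, where `φ₁ > φ₂ > ⋯ > φ_n`. -/
structure HNFiltration (P : ℝ → Set C) (E : C) where
  n : ℕ
  npos : 0 < n
  phase : Fin n → ℝ
  phase_anti : ∀ ⦃i j : Fin n⦄, i < j → phase j < phase i
  obj : Fin (n + 1) → C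
  obj_zero : IsZero (obj 0)
  obj_last : obj (Fin.last n) = E
  A : Fin n → C
  A_mem : ∀ j, A j ∈ P (phase j)
  A_nonzero : ∀ j, ¬ IsZero (A j)
  map : ∀ j : Fin n, obj j.castSucc ⟶ obj j.succ
  distinguished : ∀ j : Fin n,
    ∃ (g : obj j.succ ⟶ A j) (h : A j ⟶ (obj j.castSucc)⟦(1 : ℤ)⟧),
      Triangle.mk (map j) g h ∈ distTriang C

/-- A stability condition `σ = (Z, P)` on a triangulated category, in the sense of
Bridgeland.  `Z` is the central charge (a group homomorphism `K(D) → ℂ`, encoded as an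
isomorphism-invariant function on objects additive on distinguished triangles), and the
`P φ` are strictly full additive subcategories (encoded by their classes of objects,
closed under isomorphism and containing the zero objects), satisfying axioms (a)-(d). -/
structure StabilityCondition where
  Z : C → ℂ
  P : ℝ → Set C
  Z_iso_invariant : ∀ ⦃X Y : C⦄, (X ≅ Y) → Z X = Z Y
  Z_additive : ∀ T ∈ distTriang C, Z (Triangle.obj₂ T) = Z T.obj₁ + Z T.obj₃
  P_isoClosed : ∀ (φ : ℝ) ⦃X Y : C⦄, (X ≅ Y) → X ∈ P φ → Y ∈ P φ
  P_zero_mem : ∀ (φ : ℝ) (Z₀ : C), IsZero Z₀ → Z₀ ∈ P φ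
  P_phase : ∀ (φ : ℝ) (E : C), E ∈ P φ → ¬ IsZero E →
    ∃ m : ℝ, 0 < m ∧ Z E = (m : ℂ) * Complex.exp ((Real.pi * φ : ℝ) * Complex.I)
  P_shift : ∀ (φ : ℝ) (E : C), E ∈ P (φ + 1) ↔ ∃ F ∈ P φ, Nonempty (E ≅ F⟦(1 : ℤ)⟧)
  hom_vanishing : ∀ ⦃φ₁ φ₂ : ℝ⦄, φ₂ < φ₁ → ∀ ⦃A₁ A₂ : C⦄, A₁ ∈ P φ₁ → A₂ ∈ P φ₂ →
    ∀ f : A₁ ⟶ A₂, f = 0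
  HN : ∀ E : C, ¬ IsZero E → Nonempty (HNFiltration C P E)

namespace StabilityCondition

variable {C}

/-- The largest phase `φ⁺_σ(E)` occurring in the HN filtration of a nonzero object `E`
(junk value `0` on zero objects). -/
noncomputable def phiPlus (σ : StabilityCondition C) (E : C) : ℝ :=
  if h : ¬ IsZero E then (σ.HN E h).some.phase ⟨0, (σ.HN E h).some.npos⟩ else 0

/-- The smallest phase `φ⁻_σ(E)` occurring in the HN filtration of a nonzero object `E`
(junk value `0` on zero objects). -/
noncomputable def phiMinus (σ : StabilityCondition C) (E : C) : ℝ :=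
  if h : ¬ IsZero E then
    (σ.HN E h).some.phase ⟨(σ.HN E h).some.n - 1, Nat.sub_lt (σ.HN E h).some.npos one_pos⟩
  else 0

/-- The mass `m_σ(E) = ∑ᵢ |Z(Aᵢ)|` of a nonzero object `E`, where the `Aᵢ` are its
HN factors (junk value `0` on zero objects). -/
noncomputable def mass (σ : StabilityCondition C) (E : C) : ℝ :=
  if h : ¬ IsZero E then ∑ j, ‖σ.Z ((σ.HN E h).some.A j)‖ else 0

/-- The generalized ([0,∞]-valued) metric on stability conditions:
`d(σ₁,σ₂) = sup_{0 ≠ E} max ( |φ⁻₂(E) − φ⁻₁(E)|, |φ⁺₂(E) − φ⁺₁(E)|, |log (m₂(E)/m₁(E))| )`. -/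
noncomputable def stabDist (σ τ : StabilityCondition C) : ℝ≥0∞ :=
  ⨆ E : {E : C // ¬ IsZero E},
    ENNReal.ofReal (max |τ.phiMinus E.1 - σ.phiMinus E.1|
      (max |τ.phiPlus E.1 - σ.phiPlus E.1| |Real.log (τ.mass E.1 / σ.mass E.1)|))

end StabilityCondition

/-- The smallest extension-closed (strictly) full subcategory of `D` containing a given
class `S` of objects: closed under isomorphisms, containing zero, and closed under
extensions (distinguished triangles). -/
inductive ExtClosure (S : Set C) : C → Prop
  | of {E : C} (hE : E ∈ S) : ExtClosure S E
  | zero {E : C} (hE : IsZero E) : ExtClosure S E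
  | iso {E F : C} (e : E ≅ F) (hE : ExtClosure S E) : ExtClosure S F
  | ext (T : Triangle C) (hT : T ∈ distTriang C) (h₁ : ExtClosure S T.obj₁)
      (h₃ : ExtClosure S T.obj₃) : ExtClosure S T.obj₂

/-- `P(I)`: the smallest extension-closed full subcategory of `D` containing the
subcategories `P φ` for `φ ∈ I`. -/
def PInterval (σ : StabilityCondition C) (I : Set ℝ) : Set C :=
  {E | ExtClosure C {F | ∃ φ ∈ I, F ∈ σ.P φ} E}

/-- `A` is a proper strict subobject of `E` in the quasi-abelian full subcategory with
class of objects `S`: there is a distinguished triangle `A → E → B` with all vertices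
in `S` and `B` nonzero. -/
def ProperStrictSub (S : Set C) (A E : C) : Prop :=
  A ∈ S ∧ E ∈ S ∧ ∃ (B : C) (f : A ⟶ E) (g : E ⟶ B) (h : B ⟶ A⟦(1 : ℤ)⟧),
    B ∈ S ∧ ¬ IsZero B ∧ Triangle.mk f g h ∈ distTriang C

/-- `B` is a proper strict quotient of `E` in the quasi-abelian full subcategory with
class of objects `S`. -/
def ProperStrictQuot (S : Set C) (B E : C) : Prop :=
  B ∈ S ∧ E ∈ S ∧ ∃ (A : C) (f : A ⟶ E) (g : E ⟶ B) (h : B ⟶ A⟦(1 : ℤ)⟧),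
    A ∈ S ∧ ¬ IsZero A ∧ Triangle.mk f g h ∈ distTriang C

/-- A full subcategory (given by a class `S` of objects) is of finite length if it
satisfies both chain conditions on strict subobjects: the proper strict subobject
relation and the proper strict quotient relation are well-founded (DCC and ACC). -/
def FiniteLengthQuasiAbelian (S : Set C) : Prop :=
  WellFounded (fun A E => ProperStrictSub C S A E) ∧
  WellFounded (fun B E => ProperStrictQuot C S B E)

/-- A stability condition is locally finite if for some `ε > 0` each of the
quasi-abelian categories `P((φ−ε, φ+ε))` is of finite length. -/
def StabilityCondition.LocallyFinite (σ : StabilityCondition C) : Prop :=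
  ∃ ε : ℝ, 0 < ε ∧ ∀ φ : ℝ,
    FiniteLengthQuasiAbelian C (PInterval C σ (Set.Ioo (φ - ε) (φ + ε)))

/-- The space `Stab(D)` of locally finite stability conditions on `D`. -/
def Stab := {σ : StabilityCondition C // σ.LocallyFinite C}

/-- The topology on `Stab(D)` induced by the generalized metric `d`: generated by the
open balls. -/
noncomputable instance : TopologicalSpace (Stab C) :=
  TopologicalSpace.generateFrom
    {U : Set (Stab C) | ∃ (σ : Stab C) (ε : ℝ≥0∞), 0 < ε ∧
      U = {τ : Stab C | StabilityCondition.stabDist σ.1 τ.1 < ε}}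

/-- The heart `P((0,1])` of a stability condition. -/
def heartSet (σ : StabilityCondition C) : Set C :=
  PInterval C σ (Set.Ioc (0 : ℝ) 1)


/-! ### Auxiliary development for STATEMENT 0 -/

section BridgelandAbelian

variable {C}

namespace Bridgeland

open Pretriangulated ZeroObject

/-- Preadditive structure on a full subcategory. -/
instance instPreadditiveFullSub (P : C → Prop) :
    Preadditive (ObjectProperty.FullSubcategory P) := inferInstance

variable (σ : StabilityCondition C)

lemma homVanish {φ ψ : ℝ} (h : ψ < φ) {A B : C} (hA : A ∈ σ.P φ) (hB : B ∈ σ.P ψ)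
    (f : A ⟶ B) : f = 0 :=
  σ.hom_vanishing h hA hB f

lemma mem_shift_up {ψ : ℝ} {E : C} (hE : E ∈ σ.P ψ) : E⟦(1 : ℤ)⟧ ∈ σ.P (ψ + 1) :=
  (σ.P_shift ψ (E⟦(1 : ℤ)⟧)).2 ⟨E, hE, ⟨Iso.refl _⟩⟩

lemma mem_shift_down {ψ : ℝ} {E : C} (hE : E ∈ σ.P ψ) : E⟦(-1 : ℤ)⟧ ∈ σ.P (ψ - 1) := by
  have h1 : E ∈ σ.P ((ψ - 1) + 1) := by rwa [sub_add_cancel]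
  obtain ⟨F, hF, ⟨e⟩⟩ := (σ.P_shift (ψ - 1) E).1 h1
  refine σ.P_isoClosed (ψ - 1) (X := F) ?_ hF
  exact ((shiftFunctorCompIsoId C (1 : ℤ) (-1 : ℤ) (by ring)).app F).symm ≪≫
    ((shiftFunctor C (-1 : ℤ)).mapIso e).symm

lemma isZero_shift {E : C} (h : IsZero E) (n : ℤ) : IsZero (E⟦n⟧) :=
  (shiftFunctor C n).map_isZero h

lemma isZero_of_shift (E : C) (n : ℤ) (h : IsZero (E⟦n⟧)) : IsZero E :=
  IsZero.of_iso ((shiftFunctor C (-n)).map_isZero h)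
    ((shiftFunctorCompIsoId C n (-n) (by ring)).app E).symm

lemma Z_isZero {E : C} (h : IsZero E) : σ.Z E = 0 := by
  have h0 : σ.Z (0 : C) = 0 := by
    have h1 := σ.Z_additive _ (contractible_distinguished (0 : C))
    dsimp [contractibleTriangle] at h1
    exact (left_eq_add.mp h1)
  rw [σ.Z_iso_invariant h.isoZero, h0]

variable {σ}

/-- Vanishing of maps from a semistable of strictly larger phase into a (shifted)
HN-filtration stage. -/
lemma hn_from_shift_zero {E A : C} {ψ : ℝ} (F : HNFiltration C σ.P E) (hA : A ∈ σ.P ψ)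
    (j : Fin (F.n + 1)) :
    ∀ (_ : ∀ i : Fin F.n, (i : ℕ) < (j : ℕ) → ψ < F.phase i + 1)
      (u : (F.obj j)⟦(1 : ℤ)⟧ ⟶ A), u = 0 := by
  induction j using Fin.induction with
  | zero => exact fun _ u => (isZero_shift F.obj_zero 1).eq_of_src u 0
  | succ i ih =>
      intro hj u
      obtain ⟨g, h, hT⟩ := F.distinguished i
      have hT' := Pretriangulated.Triangle.shift_distinguished _ hT 1
      have h0 : ((Triangle.shiftFunctor C (1 : ℤ)).obj (Triangle.mk (F.map i) g h)).mor₁ ≫ u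
          = 0 :=
        ih (fun i' hi' => hj i' (by
          simp only [Fin.coe_castSucc] at hi'
          simp only [Fin.val_succ]
          omega)) _
      obtain ⟨w, hw⟩ := Pretriangulated.Triangle.yoneda_exact₂ _ hT' u h0
      have hw0 : w = 0 := homVanish σ (hj i (by simp [Fin.val_succ]))
        (mem_shift_up σ (F.A_mem i)) hA w
      rw [hw, hw0]; exact comp_zero

/-- If all maps from semistables of phase `> c` into `E` vanish, then all HN phases of `E`
are `≤ c`. -/
lemma phase_le_of_hom_vanish {E : C} (F : HNFiltration C σ.P E) {c : ℝ}
    (H : ∀ (ψ : ℝ) (A : C), A ∈ σ.P ψ → c < ψ → ∀ u : A ⟶ E, u = 0) (i : Fin F.n) :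
    F.phase i ≤ c := by
  have h0 : F.phase i ≤ F.phase ⟨0, F.npos⟩ := by
    rcases Nat.eq_zero_or_pos i.1 with h | h
    · exact le_of_eq (by rw [show i = ⟨0, F.npos⟩ from Fin.ext h])
    · exact (F.phase_anti (show (⟨0, F.npos⟩ : Fin F.n) < i from h)).le
  by_contra hcon
  push_neg at hcon
  have hc0 : c < F.phase ⟨0, F.npos⟩ := lt_of_lt_of_le hcon h0
  have key : ∀ j : Fin (F.n + 1), 0 < (j : ℕ) →
      ∃ u : F.A ⟨0, F.npos⟩ ⟶ F.obj j, u ≠ 0 := by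
    intro j
    induction j using Fin.induction with
    | zero => intro h; simp at h
    | succ i₀ ih =>
        intro _
        obtain ⟨g, h, hT⟩ := F.distinguished i₀
        rcases Nat.eq_zero_or_pos i₀.1 with h0' | h0'
        · have hi₀ : F.A ⟨0, F.npos⟩ = F.A i₀ := by
            rw [show i₀ = ⟨0, F.npos⟩ from Fin.ext h0']
          have hz : IsZero ((F.obj i₀.castSucc)⟦(1 : ℤ)⟧) := by
            refine isZero_shift ?_ 1
            have hcs : i₀.castSucc = (0 : Fin (F.n + 1)) := by
              ext; simpa using h0'
            rw [hcs]; exact F.obj_zero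
          have hTr := rot_of_distTriang _ hT
          obtain ⟨v, hv⟩ := Pretriangulated.Triangle.coyoneda_exact₂ _ hTr
            (𝟙 (F.A i₀)) (hz.eq_of_tgt _ _)
          refine ⟨eqToHom hi₀ ≫ v, fun h0'' => ?_⟩
          have hv0 : v = 0 := by
            have := congrArg (fun t => eqToHom hi₀.symm ≫ t) h0''
            exact (cancel_epi (eqToHom hi₀)).1 (h0''.trans comp_zero.symm)
          rw [hv0, zero_comp] at hv
          exact F.A_nonzero i₀ ((IsZero.iff_id_eq_zero _).mpr hv)
        · obtain ⟨u, hu⟩ := ih (by simpa using h0')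
          refine ⟨u ≫ F.map i₀, fun h0'' => ?_⟩
          have hTi := inv_rot_of_distTriang _ hT
          obtain ⟨v, hv⟩ := Pretriangulated.Triangle.coyoneda_exact₂ _ hTi u h0''
          have hlt : F.phase i₀ - 1 < F.phase ⟨0, F.npos⟩ := by
            have : F.phase i₀ ≤ F.phase ⟨0, F.npos⟩ := by
              rcases Nat.eq_zero_or_pos i₀.1 with h' | h'
              · exact le_of_eq (by rw [show i₀ = ⟨0, F.npos⟩ from Fin.ext h'])
              · exact (F.phase_anti (show (⟨0, F.npos⟩ : Fin F.n) < i₀ from h')).le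
            linarith
          have hv0 : v = 0 :=
            homVanish σ hlt (F.A_mem ⟨0, F.npos⟩) (mem_shift_down σ (F.A_mem i₀)) v
          rw [hv0, zero_comp] at hv
          exact hu hv
  obtain ⟨u, hu⟩ := key (Fin.last F.n) (by simpa using F.npos)
  have h1 : u ≫ eqToHom F.obj_last = 0 := H _ _ (F.A_mem ⟨0, F.npos⟩) hc0 _
  apply hu
  have h2 : u = (u ≫ eqToHom F.obj_last) ≫ eqToHom F.obj_last.symm := by simp
  rw [h2, h1, zero_comp]

/-- If all maps from `E` to semistables of phase `< c` vanish, then all HN phases of `E`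
are `≥ c`. -/
lemma le_phase_of_hom_vanish {E : C} (F : HNFiltration C σ.P E) {c : ℝ}
    (H : ∀ (ψ : ℝ) (B : C), B ∈ σ.P ψ → ψ < c → ∀ u : E ⟶ B, u = 0) (i : Fin F.n) :
    c ≤ F.phase i := by
  have hnpos := F.npos
  set j : Fin F.n := ⟨F.n - 1, Nat.sub_lt F.npos one_pos⟩ with hjdef
  have hji : F.phase j ≤ F.phase i := by
    rcases Nat.lt_or_ge i.1 j.1 with h' | h'
    · exact (F.phase_anti (show i < j from h')).le
    · have : i = j := Fin.ext (by
        have := i.isLt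
        simp only [hjdef] at h' ⊢
        omega)
      rw [this]
  by_contra hcon
  push_neg at hcon
  have hcj : F.phase j < c := lt_of_le_of_lt hji hcon
  obtain ⟨g, h, hT⟩ := F.distinguished j
  have hgne : g ≠ 0 := by
    intro hg0
    have hTr := rot_of_distTriang _ hT
    obtain ⟨w, hw⟩ := Pretriangulated.Triangle.yoneda_exact₂ _ hTr (𝟙 (F.A j)) (by
      show g ≫ 𝟙 (F.A j) = 0
      rw [Category.comp_id]
      exact hg0)
    have hw0 : w = 0 := hn_from_shift_zero F (F.A_mem j) j.castSucc
      (fun i' hi' => by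
        have h1 : i' < j := by simpa using hi'
        have := F.phase_anti h1
        linarith) w
    rw [hw0, comp_zero] at hw
    exact F.A_nonzero j ((IsZero.iff_id_eq_zero _).mpr hw)
  have hsucc : j.succ = Fin.last F.n := by
    ext
    simp only [Fin.val_succ, Fin.val_last, hjdef]
    omega
  have he : E = F.obj j.succ := by rw [hsucc, F.obj_last]
  have h1 := H _ _ (F.A_mem j) hcj (eqToHom he ≫ g)
  apply hgne
  have h2 : g = eqToHom he.symm ≫ (eqToHom he ≫ g) := by simp
  rw [h2, h1, comp_zero]

/-- `P φ` is closed under extensions. -/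
lemma mem_of_extension {φ : ℝ} {A E B : C} (hA : A ∈ σ.P φ) (hB : B ∈ σ.P φ)
    {f : A ⟶ E} {g : E ⟶ B} {h : B ⟶ A⟦(1 : ℤ)⟧}
    (hT : Triangle.mk f g h ∈ distTriang C) : E ∈ σ.P φ := by
  by_cases hE : IsZero E
  · exact σ.P_zero_mem φ E hE
  obtain ⟨F⟩ := σ.HN E hE
  have htop : ∀ i, F.phase i ≤ φ := phase_le_of_hom_vanish F (fun ψ A' hA' hψ u => by
    have h1 : u ≫ g = 0 := homVanish σ hψ hA' hB _
    obtain ⟨v, hv⟩ := Pretriangulated.Triangle.coyoneda_exact₂ _ hT u h1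
    rw [hv, homVanish σ hψ hA' hA v]; exact zero_comp)
  have hbot : ∀ i, φ ≤ F.phase i := le_phase_of_hom_vanish F (fun ψ B' hB' hψ u => by
    have h1 : f ≫ u = 0 := homVanish σ hψ hA hB' _
    obtain ⟨v, hv⟩ := Pretriangulated.Triangle.yoneda_exact₂ _ hT u h1
    rw [hv, homVanish σ hψ hB hB' v]; exact comp_zero)
  have hphase : ∀ i, F.phase i = φ := fun i => le_antisymm (htop i) (hbot i)
  have hn1 : F.n = 1 := by
    by_contra hn
    have h2 : 2 ≤ F.n := by have := F.npos; omega
    have h3 := F.phase_anti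
      (show (⟨0, by omega⟩ : Fin F.n) < ⟨1, by omega⟩ from Nat.zero_lt_one)
    rw [hphase, hphase] at h3
    exact lt_irrefl _ h3
  obtain ⟨g0, h0, hT0⟩ := F.distinguished ⟨0, F.npos⟩
  have hz : IsZero ((Triangle.mk (F.map ⟨0, F.npos⟩) g0 h0).obj₁) := by
    show IsZero (F.obj (Fin.castSucc ⟨0, F.npos⟩))
    have hcs : Fin.castSucc (⟨0, F.npos⟩ : Fin F.n) = (0 : Fin (F.n + 1)) := by
      ext; simp
    rw [hcs]; exact F.obj_zero
  have hiso : IsIso g0 := (Pretriangulated.Triangle.isZero₁_iff_isIso₂ _ hT0).1 hz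
  have hsucc : Fin.succ (⟨0, F.npos⟩ : Fin F.n) = Fin.last F.n := by
    ext; simp [hn1]
  have he : F.obj (Fin.succ ⟨0, F.npos⟩) = E := by rw [hsucc, F.obj_last]
  have hAj : F.A ⟨0, F.npos⟩ ∈ σ.P φ := by
    rw [← hphase ⟨0, F.npos⟩]; exact F.A_mem _
  exact σ.P_isoClosed φ ((asIso g0).symm ≪≫ eqToIso he) hAj

lemma aux_triv_triangle (Z : C) :
    Triangle.mk (0 : (0 : C)⟦(1 : ℤ)⟧ ⟶ Z) (𝟙 Z)
      (0 : Z ⟶ (0 : C)⟦(1 : ℤ)⟧⟦(1 : ℤ)⟧) ∈ distTriang C := by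
  refine isomorphic_distinguished _ (contractible_distinguished₁ Z) _ ?_
  exact Pretriangulated.Triangle.isoMk _ _
    ((isZero_shift (isZero_zero C) 1).isoZero) (Iso.refl _) (Iso.refl _)
    (by simp [Triangle.mk]) (by simp [Triangle.mk]) (by simp [Triangle.mk])

lemma aux_iso_triangle {A B : C} (a : A ⟶ B) [IsIso a] :
    Triangle.mk a (0 : B ⟶ (0 : C)) (0 : (0 : C) ⟶ A⟦(1 : ℤ)⟧) ∈ distTriang C := by
  refine isomorphic_distinguished _ (contractible_distinguished A) _ ?_
  exact Pretriangulated.Triangle.isoMk _ _ (Iso.refl A) (asIso a).symm (Iso.refl _)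
    ((IsIso.hom_inv_id a).trans (Category.comp_id _).symm) (zero_comp.trans comp_zero.symm)
    (zero_comp.trans comp_zero.symm)

open Complex in
private lemma bridgeland_im_aux (m ψ φ : ℝ) :
    (Complex.exp (-(↑(Real.pi * φ)) * Complex.I) *
      ((m : ℂ) * Complex.exp ((Real.pi * ψ : ℝ) * Complex.I))).im
      = m * Real.sin (Real.pi * (ψ - φ)) := by
  rw [mul_left_comm, ← Complex.exp_add]
  have h1 : -(↑(Real.pi * φ) : ℂ) * Complex.I + (↑(Real.pi * ψ) : ℂ) * Complex.I
      = (↑(Real.pi * (ψ - φ)) : ℂ) * Complex.I := by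
    push_cast
    ring
  rw [h1, Complex.im_ofReal_mul, Complex.exp_ofReal_mul_I_im]

/-- Structure of the cone of a morphism between objects of `P φ`:
it is an extension of an object of `P φ` by a shift of an object of `P φ`. -/
lemma cone_cases {φ : ℝ} {X Y Z : C} (hX : X ∈ σ.P φ) (hY : Y ∈ σ.P φ)
    {f : X ⟶ Y} {w : Y ⟶ Z} {d : Z ⟶ X⟦(1 : ℤ)⟧}
    (hT : Triangle.mk f w d ∈ distTriang C) :
    ∃ (K Q : C), K ∈ σ.P φ ∧ Q ∈ σ.P φ ∧
      ∃ (a : K⟦(1 : ℤ)⟧ ⟶ Z) (b : Z ⟶ Q) (c : Q ⟶ K⟦(1 : ℤ)⟧⟦(1 : ℤ)⟧),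
        Triangle.mk a b c ∈ distTriang C := by
  by_cases hZ : IsZero Z
  · exact ⟨0, Z, σ.P_zero_mem φ _ (isZero_zero C), σ.P_zero_mem φ _ hZ,
      0, 𝟙 Z, 0, aux_triv_triangle Z⟩
  obtain ⟨F⟩ := σ.HN Z hZ
  have htop : ∀ i, F.phase i ≤ φ + 1 := phase_le_of_hom_vanish F (fun ψ A' hA' hψ u => by
    have h1 : u ≫ d = 0 := homVanish σ hψ hA' (mem_shift_up σ hX) _
    obtain ⟨v, hv⟩ := Pretriangulated.Triangle.coyoneda_exact₃ _ hT u h1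
    rw [hv, homVanish σ (by linarith) hA' hY v]; exact zero_comp)
  have hbot : ∀ i, φ ≤ F.phase i := le_phase_of_hom_vanish F (fun ψ B' hB' hψ u => by
    have h1 : w ≫ u = 0 := homVanish σ hψ hY hB' _
    obtain ⟨v, hv⟩ := Pretriangulated.Triangle.yoneda_exact₃ _ hT u h1
    rw [hv, homVanish σ (by linarith) (mem_shift_up σ hX) hB' v]; exact comp_zero)
  -- the central charge / sine argument
  set u0 : ℂ := Complex.exp (-(↑(Real.pi * φ)) * Complex.I) with hu0
  have him0 : ∀ (W : C), W ∈ σ.P φ → (u0 * σ.Z W).im = 0 := by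
    intro W hW
    by_cases hWz : IsZero W
    · rw [Z_isZero σ hWz, mul_zero, Complex.zero_im]
    · obtain ⟨m, _, hZW⟩ := σ.P_phase φ W hW hWz
      rw [hZW, hu0, bridgeland_im_aux, sub_self, mul_zero, Real.sin_zero, mul_zero]
  have hIm : ∀ jn : Fin F.n, (u0 * σ.Z (F.A jn)).im = 0 := by
    set gim : Fin (F.n + 1) → ℝ := fun j => (u0 * σ.Z (F.obj j)).im with hgim
    have hstep : ∀ j : Fin F.n, gim j.succ = gim j.castSucc + (u0 * σ.Z (F.A j)).im := by
      intro j
      obtain ⟨g1, h1, hT1⟩ := F.distinguished j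
      have h2 := σ.Z_additive _ hT1
      simp only [hgim]
      rw [show σ.Z (F.obj j.succ) = σ.Z (F.obj j.castSucc) + σ.Z (F.A j) from h2,
        mul_add, Complex.add_im]
    have hnn : ∀ j : Fin F.n, 0 ≤ (u0 * σ.Z (F.A j)).im := by
      intro j
      obtain ⟨m, hm, hZA⟩ := σ.P_phase _ _ (F.A_mem j) (F.A_nonzero j)
      rw [hZA, hu0, bridgeland_im_aux]
      have h1 : 0 ≤ Real.pi * (F.phase j - φ) := by
        have := hbot j
        have := Real.pi_pos
        nlinarith
      have h2 : Real.pi * (F.phase j - φ) ≤ Real.pi := by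
        have := htop j
        have := Real.pi_pos
        nlinarith
      exact mul_nonneg hm.le (Real.sin_nonneg_of_nonneg_of_le_pi h1 h2)
    have hmono : ∀ (b : ℕ) (hb : b ≤ F.n) (a : ℕ) (_ : a ≤ b),
        gim ⟨a, by omega⟩ ≤ gim ⟨b, by omega⟩ := by
      intro b
      induction b with
      | zero =>
          intro hb a ha
          have : a = 0 := by omega
          subst this
          exact le_refl _
      | succ b ih =>
          intro hb a ha
          rcases Nat.lt_or_ge a (b + 1) with h' | h'
          · have hb' : b < F.n := by omega
            calc gim ⟨a, by omega⟩ ≤ gim ⟨b, by omega⟩ := ih (by omega) a (by omega)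
              _ ≤ gim ⟨b + 1, by omega⟩ := by
                  calc gim ⟨b, by omega⟩
                      ≤ gim ⟨b, by omega⟩ + (u0 * σ.Z (F.A ⟨b, hb'⟩)).im :=
                        le_add_of_nonneg_right (hnn _)
                    _ = gim ⟨b + 1, by omega⟩ := (hstep ⟨b, hb'⟩).symm
          · have : a = b + 1 := by omega
            subst this
            exact le_refl _
    have hg0 : gim ⟨0, Nat.zero_lt_succ _⟩ = 0 := by
      have hz : IsZero (F.obj ⟨0, Nat.zero_lt_succ _⟩) := by
        have : (⟨0, Nat.zero_lt_succ _⟩ : Fin (F.n + 1)) = 0 := by ext; simp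
        rw [this]; exact F.obj_zero
      simp only [hgim]
      rw [Z_isZero σ hz, mul_zero, Complex.zero_im]
    have hglast : gim ⟨F.n, Nat.lt_succ_self _⟩ = 0 := by
      have hobj : F.obj ⟨F.n, Nat.lt_succ_self _⟩ = Z := F.obj_last
      have hZZ : σ.Z Z = σ.Z Y - σ.Z X := by
        have h2 := σ.Z_additive _ hT
        dsimp only [Triangle.mk] at h2
        rw [h2]; ring
      simp only [hgim]
      rw [hobj, hZZ, mul_sub, Complex.sub_im, him0 Y hY, him0 X hX, sub_zero]
    intro jn
    have hup : gim jn.succ ≤ gim ⟨F.n, Nat.lt_succ_self _⟩ :=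
      hmono F.n (le_refl _) (jn.1 + 1) jn.isLt
    have hdown : gim ⟨0, Nat.zero_lt_succ _⟩ ≤ gim jn.castSucc :=
      hmono jn.1 (by omega) 0 (by omega)
    have h3 := hstep jn
    have h4 := hnn jn
    linarith
  have hph : ∀ i, F.phase i = φ ∨ F.phase i = φ + 1 := by
    intro i
    by_cases hψ1 : F.phase i = φ + 1
    · exact Or.inr hψ1
    obtain ⟨m, hm, hZA⟩ := σ.P_phase _ _ (F.A_mem i) (F.A_nonzero i)
    have h1 := hIm i
    rw [hZA, hu0, bridgeland_im_aux] at h1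
    have hsin : Real.sin (Real.pi * (F.phase i - φ)) = 0 := by
      rcases mul_eq_zero.mp h1 with h' | h'
      · exact absurd h' hm.ne'
      · exact h'
    have hlt : F.phase i < φ + 1 := lt_of_le_of_ne (htop i) hψ1
    have hpi := Real.pi_pos
    have h2 : Real.pi * (F.phase i - φ) = 0 := by
      refine (Real.sin_eq_zero_iff_of_lt_of_lt ?_ ?_).mp hsin
      · have := hbot i; nlinarith
      · nlinarith
    left
    have h3 : F.phase i - φ = 0 := by
      rcases mul_eq_zero.mp h2 with h' | h'
      · exact absurd h' Real.pi_ne_zero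
      · exact h'
    linarith
  -- case analysis on the number of HN factors
  have hn12 : F.n = 1 ∨ F.n = 2 := by
    by_contra hn
    push_neg at hn
    have h3 : 3 ≤ F.n := by have := F.npos; omega
    have h01 := F.phase_anti
      (show (⟨0, by omega⟩ : Fin F.n) < ⟨1, by omega⟩ from Nat.zero_lt_one)
    have h12 := F.phase_anti
      (show (⟨1, by omega⟩ : Fin F.n) < ⟨2, by omega⟩ from Nat.lt_succ_self 1)
    rcases hph ⟨0, by omega⟩ with h0 | h0 <;> rcases hph ⟨1, by omega⟩ with h1 | h1 <;>
      rcases hph ⟨2, by omega⟩ with h2 | h2 <;> linarith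
  rcases hn12 with hn1 | hn2
  · -- one HN factor
    obtain ⟨g0, h0, hT0⟩ := F.distinguished ⟨0, F.npos⟩
    have hz : IsZero ((Triangle.mk (F.map ⟨0, F.npos⟩) g0 h0).obj₁) := by
      show IsZero (F.obj (Fin.castSucc ⟨0, F.npos⟩))
      have hcs : Fin.castSucc (⟨0, F.npos⟩ : Fin F.n) = (0 : Fin (F.n + 1)) := by
        ext; simp
      rw [hcs]; exact F.obj_zero
    have hiso : IsIso g0 := (Pretriangulated.Triangle.isZero₁_iff_isIso₂ _ hT0).1 hz
    have hsucc : Fin.succ (⟨0, F.npos⟩ : Fin F.n) = Fin.last F.n := by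
      ext; simp [hn1]
    have he : F.obj (Fin.succ ⟨0, F.npos⟩) = Z := by rw [hsucc, F.obj_last]
    rcases hph ⟨0, F.npos⟩ with hphi | hphi
    · have hZP : Z ∈ σ.P φ :=
        σ.P_isoClosed φ ((asIso g0).symm ≪≫ eqToIso he)
          (by rw [← hphi]; exact F.A_mem ⟨0, F.npos⟩)
      exact ⟨0, Z, σ.P_zero_mem φ _ (isZero_zero C), hZP, 0, 𝟙 Z, 0, aux_triv_triangle Z⟩
    · obtain ⟨K, hK, ⟨eK⟩⟩ := (σ.P_shift φ (F.A ⟨0, F.npos⟩)).1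
        (by rw [← hphi]; exact F.A_mem ⟨0, F.npos⟩)
      refine ⟨K, 0, hK, σ.P_zero_mem φ _ (isZero_zero C),
        eK.inv ≫ inv g0 ≫ eqToHom he, 0, 0, ?_⟩
      have : IsIso (eK.inv ≫ inv g0 ≫ eqToHom he) := by infer_instance
      exact aux_iso_triangle _
  · -- two HN factors
    have h01 := F.phase_anti
      (show (⟨0, by omega⟩ : Fin F.n) < ⟨1, by omega⟩ from Nat.zero_lt_one)
    have hph0 : F.phase ⟨0, by omega⟩ = φ + 1 := by
      rcases hph ⟨0, by omega⟩ with h0 | h0 <;> rcases hph ⟨1, by omega⟩ with h1 | h1 <;>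
        first
          | linarith
          | exact h0
    have hph1 : F.phase ⟨1, by omega⟩ = φ := by
      rcases hph ⟨1, by omega⟩ with h1 | h1
      · exact h1
      · rcases hph ⟨0, by omega⟩ with h0 | h0 <;> linarith
    obtain ⟨g0, h0m, hT0⟩ := F.distinguished ⟨0, by omega⟩
    have hz : IsZero ((Triangle.mk (F.map ⟨0, by omega⟩) g0 h0m).obj₁) := by
      show IsZero (F.obj (Fin.castSucc ⟨0, by omega⟩))
      have hcs : Fin.castSucc (⟨0, by omega⟩ : Fin F.n) = (0 : Fin (F.n + 1)) := by
        ext; simp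
      rw [hcs]; exact F.obj_zero
    have hiso : IsIso g0 := (Pretriangulated.Triangle.isZero₁_iff_isIso₂ _ hT0).1 hz
    obtain ⟨K, hK, ⟨eK⟩⟩ := (σ.P_shift φ (F.A ⟨0, by omega⟩)).1
      (by rw [← hph0]; exact F.A_mem ⟨0, by omega⟩)
    obtain ⟨g1, h1m, hT1⟩ := F.distinguished ⟨1, by omega⟩
    have hcs10 : F.obj (Fin.castSucc ⟨1, by omega⟩) = F.obj (Fin.succ ⟨0, by omega⟩) := rfl
    have he2 : F.obj (Fin.succ ⟨1, by omega⟩) = Z := by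
      have hlast : Fin.succ (⟨1, by omega⟩ : Fin F.n) = Fin.last F.n := by
        ext; simp [hn2]
      rw [hlast, F.obj_last]
    refine ⟨K, F.A ⟨1, by omega⟩, hK, (by rw [← hph1]; exact F.A_mem ⟨1, by omega⟩), ?_⟩
    set ι : K⟦(1 : ℤ)⟧ ≅ F.obj (Fin.castSucc ⟨1, by omega⟩) :=
      eK.symm ≪≫ (asIso g0).symm ≪≫ eqToIso hcs10.symm with hι
    refine ⟨ι.hom ≫ F.map ⟨1, by omega⟩ ≫ eqToHom he2, eqToHom he2.symm ≫ g1,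
      h1m ≫ (shiftFunctor C (1 : ℤ)).map ι.inv, ?_⟩
    refine isomorphic_distinguished _ hT1 _ ?_
    refine Pretriangulated.Triangle.isoMk _ _ ι (eqToIso he2.symm) (Iso.refl _) ?_ ?_ ?_
    · dsimp
      simp [Triangle.mk]
    · dsimp
      simp [Triangle.mk]
    · dsimp
      simp [Triangle.mk, ← Functor.map_comp]

/-- The kernel/cokernel package for a morphism between objects of `P φ`. -/
lemma cone_package {φ : ℝ} {X Y : C} (hX : X ∈ σ.P φ) (hY : Y ∈ σ.P φ) (f : X ⟶ Y) :
    ∃ (K Q : C), K ∈ σ.P φ ∧ Q ∈ σ.P φ ∧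
    ∃ (k : K ⟶ X) (q : Y ⟶ Q),
      k ≫ f = 0 ∧ f ≫ q = 0 ∧
      (∀ (W : C), W ∈ σ.P φ → ∀ t : W ⟶ X, t ≫ f = 0 → ∃ u : W ⟶ K, u ≫ k = t) ∧
      (∀ (W : C), W ∈ σ.P φ → ∀ v : W ⟶ K, v ≫ k = 0 → v = 0) ∧
      (∀ (W : C), W ∈ σ.P φ → ∀ t : Y ⟶ W, f ≫ t = 0 → ∃ u : Q ⟶ W, q ≫ u = t) ∧
      (∀ (W : C), W ∈ σ.P φ → ∀ v : Q ⟶ W, q ≫ v = 0 → v = 0) ∧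
      (IsZero K → ∀ (W : C) (t : W ⟶ Y), t ≫ q = 0 → ∃ s : W ⟶ X, s ≫ f = t) ∧
      (IsZero Q → ∀ (W : C) (t : X ⟶ W), k ≫ t = 0 → ∃ s : Y ⟶ W, f ≫ s = t) := by
  obtain ⟨Z, w, d, hT₁⟩ := Pretriangulated.distinguished_cocone_triangle f
  obtain ⟨K₀, Q, hK₀, hQ, a, b, c, hT₂⟩ := cone_cases hX hY hT₁
  set T₁ : Triangle C := Triangle.mk f w d with hT₁def
  set T₂ : Triangle C := Triangle.mk a b c with hT₂def
  set T₂' : Triangle C := (Pretriangulated.Triangle.shiftFunctor C (-1 : ℤ)).obj T₂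
    with hT₂'def
  have hT₂'dist : T₂' ∈ distTriang C :=
    Pretriangulated.Triangle.shift_distinguished T₂ hT₂ (-1)
  set Ti : Triangle C := T₁.invRotate with hTidef
  have hTidist : Ti ∈ distTriang C := inv_rot_of_distTriang _ hT₁
  set TiI : Triangle C := Ti.invRotate with hTiIdef
  have hTiIdist : TiI ∈ distTriang C := inv_rot_of_distTriang _ hTidist
  set T₂'I : Triangle C := T₂'.invRotate with hT₂'Idef
  have hT₂'Idist : T₂'I ∈ distTriang C := inv_rot_of_distTriang _ hT₂'dist
  have hKmem : (K₀⟦(1 : ℤ)⟧)⟦(-1 : ℤ)⟧ ∈ σ.P φ := by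
    have h1 := mem_shift_down σ (mem_shift_up σ hK₀)
    rwa [show φ + 1 - 1 = φ by ring] at h1
  refine ⟨(K₀⟦(1 : ℤ)⟧)⟦(-1 : ℤ)⟧, Q, hKmem, hQ,
    T₂'.mor₁ ≫ Ti.mor₁, w ≫ b, ?_, ?_, ?_, ?_, ?_, ?_, ?_, ?_⟩
  · -- k ≫ f = 0
    exact (Category.assoc _ _ _).trans
      ((whisker_eq T₂'.mor₁ (comp_distTriang_mor_zero₁₂ Ti hTidist)).trans comp_zero)
  · -- f ≫ q = 0
    rw [← Category.assoc, show f ≫ w = 0 from comp_distTriang_mor_zero₁₂ T₁ hT₁,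
      zero_comp]
  · -- kernel lift
    intro W hW t ht
    obtain ⟨s, hs⟩ := Pretriangulated.Triangle.coyoneda_exact₂ Ti hTidist t ht
    have hs2 : s ≫ T₂'.mor₂ = 0 :=
      homVanish σ (show φ - 1 < φ by linarith) hW (mem_shift_down σ hQ) _
    obtain ⟨u, hu⟩ := Pretriangulated.Triangle.coyoneda_exact₂ T₂' hT₂'dist s hs2
    exact ⟨u, by subst hs hu; exact (Category.assoc _ _ _).symm⟩
  · -- kernel mono
    intro W hW v hv
    have h1 : (v ≫ T₂'.mor₁) ≫ TiI.mor₂ = 0 := by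
      exact (Category.assoc _ _ _).trans hv
    obtain ⟨s, hs⟩ := Pretriangulated.Triangle.coyoneda_exact₂ TiI hTiIdist
      (v ≫ T₂'.mor₁) h1
    have hs0 : s = 0 :=
      homVanish σ (show φ - 1 < φ by linarith) hW (mem_shift_down σ hY) s
    rw [hs0, zero_comp] at hs
    obtain ⟨s', hs'⟩ := Pretriangulated.Triangle.coyoneda_exact₂ T₂'I hT₂'Idist v hs
    have hmem2 : ((Q⟦(-1 : ℤ)⟧)⟦(-1 : ℤ)⟧) ∈ σ.P (φ - 1 - 1) :=
      mem_shift_down σ (mem_shift_down σ hQ)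
    have hs'0 : s' = 0 := homVanish σ (show φ - 1 - 1 < φ by linarith) hW hmem2 s'
    rw [hs', hs'0]; exact zero_comp
  · -- cokernel desc
    intro W hW t ht
    obtain ⟨s, hs⟩ := Pretriangulated.Triangle.yoneda_exact₂ T₁ hT₁ t ht
    have h1 : T₂.mor₁ ≫ s = 0 :=
      homVanish σ (show φ < φ + 1 by linarith) (mem_shift_up σ hK₀) hW _
    obtain ⟨u, hu⟩ := Pretriangulated.Triangle.yoneda_exact₂ T₂ hT₂ s h1
    refine ⟨u, ?_⟩
    exact (Category.assoc _ _ _).trans (hs.trans (whisker_eq _ hu)).symm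
  · -- cokernel epi
    intro W hW v hv
    have h1 : T₁.mor₂ ≫ (b ≫ v) = 0 := by
      exact (Category.assoc _ _ _).symm.trans hv
    obtain ⟨s, hs⟩ := Pretriangulated.Triangle.yoneda_exact₃ T₁ hT₁ (b ≫ v) h1
    have hs0 : s = 0 := homVanish σ (show φ < φ + 1 by linarith) (mem_shift_up σ hX) hW s
    rw [hs0, comp_zero] at hs
    obtain ⟨s', hs'⟩ := Pretriangulated.Triangle.yoneda_exact₃ T₂ hT₂ v hs
    have hmem2 : ((K₀⟦(1 : ℤ)⟧)⟦(1 : ℤ)⟧) ∈ σ.P (φ + 1 + 1) :=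
      mem_shift_up σ (mem_shift_up σ hK₀)
    have hs'0 : s' = 0 := homVanish σ (show φ < φ + 1 + 1 by linarith) hmem2 hW s'
    rw [hs', hs'0]; exact comp_zero
  · -- K zero implies f is the kernel of q
    intro hKz W t ht
    have hzK1 : IsZero (K₀⟦(1 : ℤ)⟧) := isZero_of_shift _ (-1) hKz
    have hbiso : IsIso T₂.mor₂ :=
      (Pretriangulated.Triangle.isZero₁_iff_isIso₂ T₂ hT₂).1 hzK1
    have h1 : (t ≫ w) ≫ T₂.mor₂ = 0 := by
      exact (Category.assoc _ _ _).trans ht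
    have h2 : t ≫ w = 0 := (cancel_mono T₂.mor₂).1 (h1.trans zero_comp.symm)
    obtain ⟨s, hs⟩ := Pretriangulated.Triangle.coyoneda_exact₂ T₁ hT₁ t h2
    exact ⟨s, hs.symm⟩
  · -- Q zero implies f is the cokernel of k
    intro hQz W t ht
    have hzQ : IsZero (T₂'.obj₃) := isZero_shift hQz (-1)
    have haiso : IsIso T₂'.mor₁ :=
      (Pretriangulated.Triangle.isZero₃_iff_isIso₁ T₂' hT₂'dist).1 hzQ
    have h1 : T₂'.mor₁ ≫ (Ti.mor₁ ≫ t) = 0 := by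
      exact (Category.assoc _ _ _).symm.trans ht
    have h2 : Ti.mor₁ ≫ t = 0 := (cancel_epi T₂'.mor₁).1 (h1.trans comp_zero.symm)
    obtain ⟨s, hs⟩ := Pretriangulated.Triangle.yoneda_exact₂ Ti hTidist t h2
    exact ⟨s, hs.symm⟩

end Bridgeland

end BridgelandAbelian

/-- for a stability condition `σ = (Z, P)` and every `φ ∈ ℝ`, the full
additive subcategory `P(φ) ⊆ D` is an abelian category. -/
theorem statement0 (σ : StabilityCondition C) (φ : ℝ) :
    Nonempty (Abelian (ObjectProperty.FullSubcategory (fun X : C => X ∈ σ.P φ))) := by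
  classical
  haveI : HasZeroObject (ObjectProperty.FullSubcategory (fun X : C => X ∈ σ.P φ)) := by
    obtain ⟨O, hO⟩ := HasZeroObject.zero (C := C)
    refine ⟨⟨⟨O, σ.P_zero_mem φ O hO⟩, ?_⟩⟩
    rw [IsZero.iff_id_eq_zero]
    ext; exact hO.eq_of_src _ _
  haveI : HasBinaryBiproducts (ObjectProperty.FullSubcategory (fun X : C => X ∈ σ.P φ)) := by
    constructor
    intro X Y
    refine hasBinaryBiproduct_of_total
      { pt := ⟨X.obj ⊞ Y.obj,
          Bridgeland.mem_of_extension X.property Y.property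
            (Pretriangulated.binaryBiproductTriangle_distinguished X.obj Y.obj)⟩
        fst := ObjectProperty.homMk (biprod.fst : X.obj ⊞ Y.obj ⟶ X.obj)
        snd := ObjectProperty.homMk (biprod.snd : X.obj ⊞ Y.obj ⟶ Y.obj)
        inl := ObjectProperty.homMk (biprod.inl : X.obj ⟶ X.obj ⊞ Y.obj)
        inr := ObjectProperty.homMk (biprod.inr : Y.obj ⟶ X.obj ⊞ Y.obj)
        inl_fst := by ext; exact biprod.inl_fst
        inl_snd := by ext; exact biprod.inl_snd
        inr_fst := by ext; exact biprod.inr_fst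
        inr_snd := by ext; exact biprod.inr_snd } ?_
    exact ObjectProperty.hom_ext _ (biprod.total (X := X.obj) (Y := Y.obj))
  haveI : HasFiniteProducts (ObjectProperty.FullSubcategory (fun X : C => X ∈ σ.P φ)) :=
    hasFiniteProducts_of_has_binary_and_terminal
  haveI : HasKernels (ObjectProperty.FullSubcategory (fun X : C => X ∈ σ.P φ)) := by
    constructor
    intro X Y f
    obtain ⟨K, Q, hK, hQ, k, q, hkf, hfq, hlift, hmono, hdesc, hepi, -, -⟩ :=
      Bridgeland.cone_package X.property Y.property f.hom
    refine HasLimit.mk ⟨KernelFork.ofι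
      (Z := (⟨K, hK⟩ : ObjectProperty.FullSubcategory (fun X : C => X ∈ σ.P φ)))
      (ObjectProperty.homMk k) (by ext; exact hkf), ?_⟩
    refine KernelFork.IsLimit.ofι _ _
      (fun {W'} g' hg' => ObjectProperty.homMk
        (hlift W'.obj W'.property g'.hom (congrArg InducedCategory.Hom.hom hg')).choose)
      (fun {W'} g' hg' => by
        ext
        exact (hlift W'.obj W'.property g'.hom (congrArg InducedCategory.Hom.hom hg')).choose_spec)
      (fun {W'} g' hg' m hm => ?_)
    have hm' : m.hom ≫ k = g'.hom := congrArg InducedCategory.Hom.hom hm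
    have h1 : (m.hom - (hlift W'.obj W'.property g'.hom
        (congrArg InducedCategory.Hom.hom hg')).choose) ≫ k = 0 := by
      rw [Preadditive.sub_comp]
      exact sub_eq_zero.mpr (hm'.trans (hlift W'.obj W'.property g'.hom
        (congrArg InducedCategory.Hom.hom hg')).choose_spec.symm)
    ext; exact sub_eq_zero.mp (hmono W'.obj W'.property _ h1)
  haveI : HasCokernels (ObjectProperty.FullSubcategory (fun X : C => X ∈ σ.P φ)) := by
    constructor
    intro X Y f
    obtain ⟨K, Q, hK, hQ, k, q, hkf, hfq, hlift, hmono, hdesc, hepi, -, -⟩ :=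
      Bridgeland.cone_package X.property Y.property f.hom
    refine HasColimit.mk ⟨CokernelCofork.ofπ
      (Z := (⟨Q, hQ⟩ : ObjectProperty.FullSubcategory (fun X : C => X ∈ σ.P φ)))
      (ObjectProperty.homMk q) (by ext; exact hfq), ?_⟩
    refine CokernelCofork.IsColimit.ofπ _ _
      (fun {W'} g' hg' => ObjectProperty.homMk
        (hdesc W'.obj W'.property g'.hom (congrArg InducedCategory.Hom.hom hg')).choose)
      (fun {W'} g' hg' => by
        ext
        exact (hdesc W'.obj W'.property g'.hom (congrArg InducedCategory.Hom.hom hg')).choose_spec)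
      (fun {W'} g' hg' m hm => ?_)
    have hm' : q ≫ m.hom = g'.hom := congrArg InducedCategory.Hom.hom hm
    have h1 : q ≫ (m.hom - (hdesc W'.obj W'.property g'.hom
        (congrArg InducedCategory.Hom.hom hg')).choose) = 0 := by
      rw [Preadditive.comp_sub]
      exact sub_eq_zero.mpr (hm'.trans (hdesc W'.obj W'.property g'.hom
        (congrArg InducedCategory.Hom.hom hg')).choose_spec.symm)
    ext; exact sub_eq_zero.mp (hepi W'.obj W'.property _ h1)
  haveI : IsNormalMonoCategory (ObjectProperty.FullSubcategory (fun X : C => X ∈ σ.P φ)) := by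
    constructor
    intro X Y f hf
    obtain ⟨K, Q, hK, hQ, k, q, hkf, hfq, hlift, hmono, hdesc, hepi, hKer, hCok⟩ :=
      Bridgeland.cone_package X.property Y.property f.hom
    have hk0 : k = 0 := congrArg InducedCategory.Hom.hom
      ((Preadditive.mono_iff_cancel_zero f).mp hf
        (⟨K, hK⟩ : ObjectProperty.FullSubcategory (fun X : C => X ∈ σ.P φ))
        (ObjectProperty.homMk k) (by ext; exact hkf))
    have hKz : IsZero K := by
      rw [IsZero.iff_id_eq_zero]
      exact hmono K hK (𝟙 K) (by rw [hk0, comp_zero])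
    refine ⟨?_⟩
    exact
      { Z := ⟨Q, hQ⟩
        g := ObjectProperty.homMk q
        w := by ext; exact hfq
        isLimit := KernelFork.IsLimit.ofι _ _
          (fun {W'} t ht => ObjectProperty.homMk
            (hKer hKz W'.obj t.hom (congrArg InducedCategory.Hom.hom ht)).choose)
          (fun {W'} t ht => by
            ext; exact (hKer hKz W'.obj t.hom (congrArg InducedCategory.Hom.hom ht)).choose_spec)
          (fun {W'} t ht m hm =>
            (cancel_mono f).1 (hm.trans (by
              ext
              exact (hKer hKz W'.obj t.hom
                (congrArg InducedCategory.Hom.hom ht)).choose_spec.symm))) }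
  haveI : IsNormalEpiCategory (ObjectProperty.FullSubcategory (fun X : C => X ∈ σ.P φ)) := by
    constructor
    intro X Y f hf
    obtain ⟨K, Q, hK, hQ, k, q, hkf, hfq, hlift, hmono, hdesc, hepi, hKer, hCok⟩ :=
      Bridgeland.cone_package X.property Y.property f.hom
    have hq0 : q = 0 := congrArg InducedCategory.Hom.hom
      ((Preadditive.epi_iff_cancel_zero f).mp hf
        (⟨Q, hQ⟩ : ObjectProperty.FullSubcategory (fun X : C => X ∈ σ.P φ))
        (ObjectProperty.homMk q) (by ext; exact hfq))
    have hQz : IsZero Q := by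
      rw [IsZero.iff_id_eq_zero]
      exact hepi Q hQ (𝟙 Q) (by rw [hq0, zero_comp])
    refine ⟨?_⟩
    exact
      { W := ⟨K, hK⟩
        g := ObjectProperty.homMk k
        w := by ext; exact hkf
        isColimit := CokernelCofork.IsColimit.ofπ _ _
          (fun {W'} t ht => ObjectProperty.homMk
            (hCok hQz W'.obj t.hom (congrArg InducedCategory.Hom.hom ht)).choose)
          (fun {W'} t ht => by
            ext; exact (hCok hQz W'.obj t.hom (congrArg InducedCategory.Hom.hom ht)).choose_spec)
          (fun {W'} t ht m hm =>
            (cancel_epi f).1 (hm.trans (by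
              ext
              exact (hCok hQz W'.obj t.hom
                (congrArg InducedCategory.Hom.hom ht)).choose_spec.symm))) }
  exact ⟨{ toPreadditive := inferInstance, toIsNormalMonoCategory := inferInstance,
           toIsNormalEpiCategory := inferInstance }⟩
end

section
/- Let σ = (Z, P) be a stability condition on a triangulated category D and let E be a nonzero object of D. Suppose given two Harder–Narasimhan filtrations of E: triangles E_{j-1} → E_j → A_j with E₀ = 0, E_n = E, A_j a nonzero object of P(φ_j) and φ₁ > ... > φ_n, and triangles E'_{k-1} → E'_k → B_k with E'₀ = 0, E'_m = E, B_k a nonzero object of P(ψ_k) and ψ₁ > ... > ψ_m. Then n = m, φ_j = ψ_j for all j, and E_j ≅ E'_j and A_j ≅ B_j for all j; that is, the decomposition of axiom (d) is uniquely defined up to isomorphism. -/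
/-!
Basic definitions: Bridgeland stability conditions on a triangulated category.

The Grothendieck group `K(D)` is encoded implicitly: a group homomorphism `K(D) → ℂ`
is the same thing as a function on objects which is invariant under isomorphism and
additive on distinguished triangles.
-/

open CategoryTheory CategoryTheory.Limits CategoryTheory.Pretriangulated
open scoped ENNReal Classical

universe v u

variable (C : Type u) [Category.{v} C] [HasZeroObject C] [HasShift C ℤ]
  [Preadditive C] [∀ n : ℤ, (CategoryTheory.shiftFunctor C n).Additive] [Pretriangulated C]

section HNUniqueness

variable {C}

/-- Auxiliary ℕ-indexed repackaging of a Harder–Narasimhan filtration. -/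
structure HNData (P : ℝ → Set C) where
  n : ℕ
  npos : 0 < n
  phase : ℕ → ℝ
  anti : ∀ ⦃i j : ℕ⦄, i < j → j < n → phase j < phase i
  obj : ℕ → C
  obj0 : IsZero (obj 0)
  A : ℕ → C
  mem : ∀ j, j < n → A j ∈ P (phase j)
  nz : ∀ j, j < n → ¬ IsZero (A j)
  tri : ∀ j, j < n → ∃ (f : obj j ⟶ obj (j + 1)) (g : obj (j + 1) ⟶ A j)
    (h : A j ⟶ (obj j)⟦(1 : ℤ)⟧), Triangle.mk f g h ∈ distTriang C

namespace HNUniqueAux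

lemma shift_hom_zero {X W : C} (h : ∀ u : X ⟶ W⟦(-1 : ℤ)⟧, u = 0)
    (g : X⟦(1 : ℤ)⟧ ⟶ W) : g = 0 := by
  have h1 : (shiftFunctor C (-1 : ℤ)).map g = 0 := by
    have h2 := h ((shiftFunctorCompIsoId C (1 : ℤ) (-1 : ℤ) (by norm_num)).inv.app X ≫
      (shiftFunctor C (-1 : ℤ)).map g)
    rw [← cancel_epi ((shiftFunctorCompIsoId C (1 : ℤ) (-1 : ℤ) (by norm_num)).inv.app X), h2,
      comp_zero]
  apply (shiftFunctor C (-1 : ℤ)).map_injective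
  rw [h1, Functor.map_zero]

lemma memP_shift_neg (σ : StabilityCondition C) {A : C} {a : ℝ} (h : A ∈ σ.P a) :
    (A⟦(-1 : ℤ)⟧) ∈ σ.P (a - 1) := by
  have h' : A ∈ σ.P (a - 1 + 1) := by rwa [show a - 1 + 1 = a by ring]
  obtain ⟨F, hF, ⟨e⟩⟩ := (σ.P_shift (a - 1) A).1 h'
  refine σ.P_isoClosed _ ?_ hF
  exact (((shiftFunctor C (-1 : ℤ)).mapIso e).trans
    ((shiftFunctorCompIsoId C (1 : ℤ) (-1 : ℤ) (by norm_num)).app F)).symm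

lemma hom_from_zero (σ : StabilityCondition C) (D : HNData σ.P) {W : C} :
    ∀ (k : ℕ), k ≤ D.n → (∀ j, j < k → ∀ g : D.A j ⟶ W, g = 0) →
    ∀ f : D.obj k ⟶ W, f = 0 := by
  intro k
  induction k with
  | zero => intro _ _ f; exact D.obj0.eq_of_src f 0
  | succ k ih =>
    intro hk hA f
    obtain ⟨u, g, h, hT⟩ := D.tri k (by omega)
    have h1 : u ≫ f = 0 := ih (by omega) (fun j hj => hA j (by omega)) _
    obtain ⟨g', hg'⟩ := Triangle.yoneda_exact₂ _ hT f h1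
    rw [hg', hA k (by omega) g']; exact comp_zero

lemma obj_nonzero (σ : StabilityCondition C) (D : HNData σ.P) :
    ∀ (k : ℕ), 1 ≤ k → k ≤ D.n → ¬ IsZero (D.obj k) := by
  obtain ⟨u0, g0, h0, hT0⟩ := D.tri 0 D.npos
  have hiso : IsIso g0 := (Triangle.isZero₁_iff_isIso₂ (Triangle.mk u0 g0 h0) hT0).1 D.obj0
  have e1 : D.obj 1 ≅ D.A 0 := asIso g0
  have hobj1 : D.obj 1 ∈ σ.P (D.phase 0) := σ.P_isoClosed _ e1.symm (D.mem 0 D.npos)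
  have hobj1nz : ¬ IsZero (D.obj 1) := fun hz => D.nz 0 D.npos (hz.of_iso e1.symm)
  have key : ∀ k, 1 ≤ k → k ≤ D.n → ∃ f : D.obj 1 ⟶ D.obj k, f ≠ 0 := by
    intro k
    induction k with
    | zero => omega
    | succ k ih =>
      intro _ hk
      rcases Nat.eq_zero_or_pos k with hk1 | hk1
      · subst hk1
        exact ⟨𝟙 _, fun h => hobj1nz ((IsZero.iff_id_eq_zero _).2 h)⟩
      · obtain ⟨f, hf⟩ := ih (by omega) (by omega)
        obtain ⟨u, g, h, hT⟩ := D.tri k (by omega)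
        refine ⟨f ≫ u, fun h0 => hf ?_⟩
        obtain ⟨g', hg'⟩ := Triangle.coyoneda_exact₂ _ (inv_rot_of_distTriang _ hT) f h0
        have hg'0 : g' = 0 := by
          refine σ.hom_vanishing (show D.phase k - 1 < D.phase 0 from ?_) hobj1
            (memP_shift_neg σ (D.mem k (by omega))) g'
          have := D.anti hk1 (by omega)
          linarith
        rw [hg', hg'0]; exact zero_comp
  intro k h1 hk
  obtain ⟨f, hf⟩ := key k h1 hk
  exact fun hz => hf (hz.eq_of_tgt f 0)

lemma step (σ : StabilityCondition C) (D₁ D₂ : HNData σ.P) (a b : ℕ)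
    (ha : D₁.n = a + 1) (hb : D₂.n = b + 1)
    (e : D₁.obj (a + 1) ≅ D₂.obj (b + 1)) :
    D₁.phase a = D₂.phase b ∧ Nonempty (D₁.A a ≅ D₂.A b) ∧
      Nonempty (D₁.obj a ≅ D₂.obj b) := by
  obtain ⟨u, q, w, hT⟩ := D₁.tri a (by omega)
  obtain ⟨u', q', w', hT'⟩ := D₂.tri b (by omega)
  have hwv : ∀ r : (D₁.obj a)⟦(1 : ℤ)⟧ ⟶ D₁.A a, r = 0 := by
    intro r
    refine shift_hom_zero ?_ r
    intro v
    refine hom_from_zero σ D₁ a (by omega) ?_ v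
    intro j hj g
    refine σ.hom_vanishing (show D₁.phase a - 1 < D₁.phase j from ?_) (D₁.mem j (by omega))
      (memP_shift_neg σ (D₁.mem a (by omega))) g
    have := D₁.anti hj (by omega)
    linarith
  have hwv' : ∀ r : (D₂.obj b)⟦(1 : ℤ)⟧ ⟶ D₂.A b, r = 0 := by
    intro r
    refine shift_hom_zero ?_ r
    intro v
    refine hom_from_zero σ D₂ b (by omega) ?_ v
    intro j hj g
    refine σ.hom_vanishing (show D₂.phase b - 1 < D₂.phase j from ?_) (D₂.mem j (by omega))
      (memP_shift_neg σ (D₂.mem b (by omega))) g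
    have := D₂.anti hj (by omega)
    linarith
  have hq : q ≠ 0 := by
    intro h0
    obtain ⟨r, hr⟩ := Triangle.yoneda_exact₂ _ (rot_of_distTriang _ hT) (𝟙 (D₁.A a))
      (by show q ≫ 𝟙 (D₁.A a) = 0; rw [h0, Limits.zero_comp])
    exact D₁.nz a (by omega) ((IsZero.iff_id_eq_zero _).2 (by rw [hr, hwv r]; exact comp_zero))
  have hq' : q' ≠ 0 := by
    intro h0
    obtain ⟨r, hr⟩ := Triangle.yoneda_exact₂ _ (rot_of_distTriang _ hT') (𝟙 (D₂.A b))
      (by show q' ≫ 𝟙 (D₂.A b) = 0; rw [h0, Limits.zero_comp])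
    exact D₂.nz b (by omega) ((IsZero.iff_id_eq_zero _).2 (by rw [hr, hwv' r]; exact comp_zero))
  have hphase : D₁.phase a = D₂.phase b := by
    rcases lt_trichotomy (D₁.phase a) (D₂.phase b) with h | h | h
    · exfalso
      apply hq
      have h2 : e.inv ≫ q = 0 := by
        refine hom_from_zero σ D₂ (b + 1) (by omega) ?_ _
        intro j hj g
        refine σ.hom_vanishing (show D₁.phase a < D₂.phase j from ?_) (D₂.mem j (by omega))
          (D₁.mem a (by omega)) g
        rcases Nat.lt_or_ge j b with hj' | hj'
        · exact lt_trans h (D₂.anti hj' (by omega))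
        · have hjb : j = b := by omega
          rw [hjb]; exact h
      calc q = e.hom ≫ (e.inv ≫ q) := by rw [← Category.assoc, e.hom_inv_id, Category.id_comp]
        _ = 0 := by rw [h2, comp_zero]
    · exact h
    · exfalso
      apply hq'
      have h2 : e.hom ≫ q' = 0 := by
        refine hom_from_zero σ D₁ (a + 1) (by omega) ?_ _
        intro j hj g
        refine σ.hom_vanishing (show D₂.phase b < D₁.phase j from ?_) (D₁.mem j (by omega))
          (D₂.mem b (by omega)) g
        rcases Nat.lt_or_ge j a with hj' | hj'
        · exact lt_trans h (D₁.anti hj' (by omega))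
        · have hja : j = a := by omega
          rw [hja]; exact h
      calc q' = e.inv ≫ (e.hom ≫ q') := by rw [← Category.assoc, e.inv_hom_id, Category.id_comp]
        _ = 0 := by rw [h2, comp_zero]
  have hbv : u ≫ (e.hom ≫ q') = 0 := by
    refine hom_from_zero σ D₁ a (by omega) ?_ _
    intro j hj g
    refine σ.hom_vanishing (show D₂.phase b < D₁.phase j from ?_) (D₁.mem j (by omega))
      (D₂.mem b (by omega)) g
    rw [← hphase]
    exact D₁.anti hj (by omega)
  have hβex : ∃ β : D₁.A a ⟶ D₂.A b, e.hom ≫ q' = q ≫ β := by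
    obtain ⟨β₀, hβ₀⟩ := Triangle.yoneda_exact₂ _ hT (e.hom ≫ q') hbv
    exact ⟨β₀, hβ₀⟩
  obtain ⟨β, hβ⟩ := hβex
  have hgv : u' ≫ (e.inv ≫ q) = 0 := by
    refine hom_from_zero σ D₂ b (by omega) ?_ _
    intro j hj g
    refine σ.hom_vanishing (show D₁.phase a < D₂.phase j from ?_) (D₂.mem j (by omega))
      (D₁.mem a (by omega)) g
    rw [hphase]
    exact D₂.anti hj (by omega)
  have hγex : ∃ γ : D₂.A b ⟶ D₁.A a, e.inv ≫ q = q' ≫ γ := by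
    obtain ⟨γ₀, hγ₀⟩ := Triangle.yoneda_exact₂ _ hT' (e.inv ≫ q) hgv
    exact ⟨γ₀, hγ₀⟩
  obtain ⟨γ, hγ⟩ := hγex
  have hcomp : q ≫ β ≫ γ = q := by
    rw [← Category.assoc, ← hβ, Category.assoc, ← hγ, ← Category.assoc, e.hom_inv_id,
      Category.id_comp]
  have hβγ : β ≫ γ = 𝟙 _ := by
    have h1 : q ≫ (β ≫ γ - 𝟙 _) = 0 := by
      rw [Preadditive.comp_sub, hcomp, Category.comp_id, sub_self]
    obtain ⟨ε, hε⟩ := Triangle.yoneda_exact₂ _ (rot_of_distTriang _ hT) (β ≫ γ - 𝟙 _) h1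
    rw [hwv ε] at hε
    exact sub_eq_zero.1 (hε.trans comp_zero)
  have hcomp' : q' ≫ γ ≫ β = q' := by
    rw [← Category.assoc, ← hγ, Category.assoc, ← hβ, ← Category.assoc, e.inv_hom_id,
      Category.id_comp]
  have hγβ : γ ≫ β = 𝟙 _ := by
    have h1 : q' ≫ (γ ≫ β - 𝟙 _) = 0 := by
      rw [Preadditive.comp_sub, hcomp', Category.comp_id, sub_self]
    obtain ⟨ε, hε⟩ := Triangle.yoneda_exact₂ _ (rot_of_distTriang _ hT') (γ ≫ β - 𝟙 _) h1
    rw [hwv' ε] at hε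
    exact sub_eq_zero.1 (hε.trans comp_zero)
  have eβ : D₁.A a ≅ D₂.A b := ⟨β, γ, hβγ, hγβ⟩
  obtain ⟨c, hc₁, hc₂⟩ := Pretriangulated.complete_distinguished_triangle_morphism _ _
    (rot_of_distTriang _ hT) (rot_of_distTriang _ hT') e.hom β hβ.symm
  have hφiso : IsIso c := by
    have := Pretriangulated.isIso₃_of_isIso₁₂
      (T := (Triangle.mk u q w).rotate) (T' := (Triangle.mk u' q' w').rotate)
      { hom₁ := e.hom, hom₂ := β, hom₃ := c, comm₁ := hβ.symm, comm₂ := hc₁, comm₃ := hc₂ }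
      (rot_of_distTriang _ hT) (rot_of_distTriang _ hT')
      (Iso.isIso_hom e) ⟨⟨γ, hβγ, hγβ⟩⟩
    exact this
  exact ⟨hphase, ⟨eβ⟩, ⟨(shiftFunctor C (1 : ℤ)).preimageIso (@asIso _ _ _ _ c hφiso)⟩⟩

/-- Truncation of an `HNData` (dropping the last factor). -/
def _root_.HNData.trunc {P : ℝ → Set C} (D : HNData P) (h : 1 < D.n) : HNData P where
  n := D.n - 1
  npos := by omega
  phase := D.phase
  anti := fun i j hij hj => D.anti hij (by omega)
  obj := D.obj
  obj0 := D.obj0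
  A := D.A
  mem := fun j hj => D.mem j (by omega)
  nz := fun j hj => D.nz j (by omega)
  tri := fun j hj => D.tri j (by omega)

lemma unique (σ : StabilityCondition C) :
    ∀ (N : ℕ) (D₁ D₂ : HNData σ.P), D₁.n = N → (D₁.obj D₁.n ≅ D₂.obj D₂.n) →
    D₁.n = D₂.n ∧ (∀ j, j < D₁.n → D₁.phase j = D₂.phase j) ∧
      (∀ j, j ≤ D₁.n → Nonempty (D₁.obj j ≅ D₂.obj j)) ∧
      (∀ j, j < D₁.n → Nonempty (D₁.A j ≅ D₂.A j)) := by
  intro N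
  induction N with
  | zero => intro D₁ D₂ h _; exact absurd h (by have := D₁.npos; omega)
  | succ N ih =>
    intro D₁ D₂ hN e
    obtain ⟨b, hb⟩ : ∃ b, D₂.n = b + 1 := ⟨D₂.n - 1, by have := D₂.npos; omega⟩
    rw [hN, hb] at e
    obtain ⟨hph, ⟨eA⟩, ⟨eO⟩⟩ := step σ D₁ D₂ N b hN hb e
    rcases Nat.eq_zero_or_pos N with hN0 | hN0
    · subst hN0
      have hb0 : b = 0 := by
        by_contra hb0
        exact obj_nonzero σ D₂ b (by omega) (by omega) (D₁.obj0.of_iso eO.symm)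
      subst hb0
      refine ⟨by omega, ?_, ?_, ?_⟩
      · intro j hj
        have hj0 : j = 0 := by omega
        rw [hj0]; exact hph
      · intro j hj
        rw [hN] at hj
        rcases Nat.eq_zero_or_pos j with hj0 | hj0
        · rw [hj0]; exact ⟨D₁.obj0.iso D₂.obj0⟩
        · have hj1 : j = 1 := by omega
          rw [hj1]; exact ⟨e⟩
      · intro j hj
        have hj0 : j = 0 := by omega
        rw [hj0]; exact ⟨eA⟩
    · have hb1 : 1 ≤ b := by
        by_contra hb'
        have hb0 : b = 0 := by omega
        subst hb0
        exact obj_nonzero σ D₁ N hN0 (by omega) (D₂.obj0.of_iso eO)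
      obtain ⟨hn, hps, hos, has⟩ := ih (D₁.trunc (by omega)) (D₂.trunc (by omega)) (by
          show D₁.n - 1 = N
          omega) (by
          show D₁.obj (D₁.n - 1) ≅ D₂.obj (D₂.n - 1)
          rw [show D₁.n - 1 = N by omega, show D₂.n - 1 = b by omega]
          exact eO)
      have hnn : D₁.n - 1 = D₂.n - 1 := hn
      have hbN : b = N := by omega
      rw [hbN] at hph e
      have eA' : Nonempty (D₁.A N ≅ D₂.A N) := by
        have h' : Nonempty (D₁.A N ≅ D₂.A b) := ⟨eA⟩
        rwa [hbN] at h'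
      refine ⟨by omega, ?_, ?_, ?_⟩
      · intro j hj
        rcases Nat.lt_or_ge j N with hj' | hj'
        · exact hps j (by show j < D₁.n - 1; omega)
        · have hjN : j = N := by omega
          rw [hjN]; exact hph
      · intro j hj
        rcases Nat.lt_or_ge j (N + 1) with hj' | hj'
        · exact hos j (by show j ≤ D₁.n - 1; omega)
        · have hjN : j = N + 1 := by omega
          rw [hjN]; exact ⟨e⟩
      · intro j hj
        rcases Nat.lt_or_ge j N with hj' | hj'
        · exact has j (by show j < D₁.n - 1; omega)
        · have hjN : j = N := by omega
          rw [hjN]; exact eA'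

end HNUniqueAux

/-- Repackaging of an `HNFiltration` as ℕ-indexed data. -/
def _root_.HNFiltration.toData {P : ℝ → Set C} {E : C} (F : HNFiltration C P E) :
    HNData P where
  n := F.n
  npos := F.npos
  phase := fun j => if h : j < F.n then F.phase ⟨j, h⟩ else 0
  anti := by
    intro i j hij hj
    rw [dif_pos hj, dif_pos (lt_trans hij hj)]
    exact F.phase_anti (show (⟨i, lt_trans hij hj⟩ : Fin F.n) < ⟨j, hj⟩ from hij)
  obj := fun j => if h : j < F.n + 1 then F.obj ⟨j, h⟩ else E
  obj0 := by
    rw [dif_pos (Nat.succ_pos _), Fin.mk_zero]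
    exact F.obj_zero
  A := fun j => if h : j < F.n then F.A ⟨j, h⟩ else E
  mem := fun j hj => by rw [dif_pos hj, dif_pos hj]; exact F.A_mem _
  nz := fun j hj => by rw [dif_pos hj]; exact F.A_nonzero _
  tri := fun j hj => by
    rw [dif_pos hj, dif_pos (show j < F.n + 1 by omega), dif_pos (show j + 1 < F.n + 1 by omega)]
    obtain ⟨g, h, hT⟩ := F.distinguished ⟨j, hj⟩
    exact ⟨F.map ⟨j, hj⟩, g, h, hT⟩

end HNUniqueness


/-- the Harder–Narasimhan filtration of a nonzero object is unique up to
isomorphism: two HN filtrations have the same length, the same phases, and isomorphic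
objects and factors. -/
theorem statement1 (σ : StabilityCondition C) (E : C) (hE : ¬ IsZero E)
    (F₁ F₂ : HNFiltration C σ.P E) :
    ∃ h : F₁.n = F₂.n,
      (∀ j : Fin F₁.n, F₁.phase j = F₂.phase (Fin.cast h j)) ∧
      (∀ j : Fin (F₁.n + 1), Nonempty (F₁.obj j ≅ F₂.obj (Fin.cast (by rw [h]) j))) ∧
      (∀ j : Fin F₁.n, Nonempty (F₁.A j ≅ F₂.A (Fin.cast h j))) := by
  classical
  have e : F₁.toData.obj F₁.toData.n ≅ F₂.toData.obj F₂.toData.n := by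
    have h1 : F₁.toData.obj F₁.toData.n = E := by
      show (if h : F₁.n < F₁.n + 1 then F₁.obj ⟨F₁.n, h⟩ else E) = E
      rw [dif_pos (Nat.lt_succ_self _)]
      exact F₁.obj_last
    have h2 : F₂.toData.obj F₂.toData.n = E := by
      show (if h : F₂.n < F₂.n + 1 then F₂.obj ⟨F₂.n, h⟩ else E) = E
      rw [dif_pos (Nat.lt_succ_self _)]
      exact F₂.obj_last
    exact eqToIso (h1.trans h2.symm)
  obtain ⟨hn, hps, hos, has⟩ := HNUniqueAux.unique σ F₁.n F₁.toData F₂.toData rfl e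
  have h : F₁.n = F₂.n := hn
  refine ⟨h, ?_, ?_, ?_⟩
  · intro j
    have h1 := hps j.val j.isLt
    dsimp only [HNFiltration.toData] at h1
    rw [dif_pos j.isLt, dif_pos (show j.val < F₂.n from h ▸ j.isLt)] at h1
    exact h1
  · intro j
    obtain ⟨o⟩ := hos j.val (Nat.lt_succ_iff.mp j.isLt)
    refine ⟨eqToIso ?_ ≪≫ o ≪≫ eqToIso ?_⟩
    · show F₁.obj j = (if hc : j.val < F₁.n + 1 then F₁.obj ⟨j.val, hc⟩ else E)
      rw [dif_pos j.isLt]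
    · show (if hc : j.val < F₂.n + 1 then F₂.obj ⟨j.val, hc⟩ else E)
        = F₂.obj (Fin.cast (by rw [h]) j)
      rw [dif_pos (show j.val < F₂.n + 1 by omega)]
      rfl
  · intro j
    obtain ⟨o⟩ := has j.val j.isLt
    refine ⟨eqToIso ?_ ≪≫ o ≪≫ eqToIso ?_⟩
    · show F₁.A j = (if hc : j.val < F₁.n then F₁.A ⟨j.val, hc⟩ else E)
      rw [dif_pos j.isLt]
    · show (if hc : j.val < F₂.n then F₂.A ⟨j.val, hc⟩ else E) = F₂.A (Fin.cast h j)
      rw [dif_pos (show j.val < F₂.n from h ▸ j.isLt)]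
      rfl
end

section
/- Let D be a triangulated category and let Stab(D) be the set of locally finite stability conditions on D. The function d(σ₁, σ₂) = sup over nonzero E ∈ D of max{ |φ⁻_{σ₂}(E) − φ⁻_{σ₁}(E)|, |φ⁺_{σ₂}(E) − φ⁺_{σ₁}(E)|, |log(m_{σ₂}(E)/m_{σ₁}(E))| } ∈ [0, ∞] is a generalized metric on Stab(D): it is symmetric, satisfies the triangle inequality d(σ₁, σ₃) ≤ d(σ₁, σ₂) + d(σ₂, σ₃), and d(σ₁, σ₂) = 0 holds if and only if σ₁ = σ₂. -/
/-!
Basic definitions: Bridgeland stability conditions on a triangulated category.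

The Grothendieck group `K(D)` is encoded implicitly: a group homomorphism `K(D) → ℂ`
is the same thing as a function on objects which is invariant under isomorphism and
additive on distinguished triangles.
-/

open CategoryTheory CategoryTheory.Limits CategoryTheory.Pretriangulated
open scoped ENNReal Classical

universe v u

variable (C : Type u) [Category.{v} C] [HasZeroObject C] [HasShift C ℤ]
  [Preadditive C] [∀ n : ℤ, (CategoryTheory.shiftFunctor C n).Additive] [Pretriangulated C]

section AuxProofs

variable {C}
variable {σ : StabilityCondition C}

namespace HNAux

lemma comp_iso_hom_eq_zero {X W Y : C} [HasZeroObject C] (e : W ≅ Y) (l : X ⟶ W)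
    (hl : l ≫ e.hom = 0) : l = 0 := by
  rw [← Category.comp_id l, ← e.hom_inv_id, ← Category.assoc, hl, zero_comp]

/-- Morphisms from HN filtration objects into an object of strictly smaller phase vanish. -/
lemma hom_from_obj_zero {E B : C} (F : HNFiltration C σ.P E) {ψ : ℝ}
    (hB : B ∈ σ.P ψ) (hψ : ∀ i : Fin F.n, ψ < F.phase i) :
    ∀ (j : Fin (F.n + 1)) (f : F.obj j ⟶ B), f = 0 := by
  intro j
  induction j using Fin.induction with
  | zero => intro f; exact F.obj_zero.eq_of_src f 0
  | succ i ih =>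
    intro f
    obtain ⟨g, h, hT⟩ := F.distinguished i
    obtain ⟨k, hk⟩ := Pretriangulated.Triangle.yoneda_exact₂ _ hT f (ih (F.map i ≫ f))
    rw [hk, σ.hom_vanishing (hψ i) (F.A_mem i) hB k]; exact comp_zero

/-- Morphisms from once-shifted HN filtration objects into an object of phase smaller than
all `φᵢ + 1` vanish. -/
lemma hom_from_obj_shift_zero {E B : C} (F : HNFiltration C σ.P E) {ψ : ℝ}
    (hB : B ∈ σ.P ψ) (hψ : ∀ i : Fin F.n, ψ < F.phase i + 1) :
    ∀ (j : Fin (F.n + 1)) (f : (F.obj j)⟦(1 : ℤ)⟧ ⟶ B), f = 0 := by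
  intro j
  induction j using Fin.induction with
  | zero =>
    intro f
    exact ((shiftFunctor C (1 : ℤ)).map_isZero F.obj_zero).eq_of_src f 0
  | succ i ih =>
    intro f
    obtain ⟨g, h, hT⟩ := F.distinguished i
    have hT3 := rot_of_distTriang _ (rot_of_distTriang _ (rot_of_distTriang _ hT))
    obtain ⟨k, hk⟩ := Pretriangulated.Triangle.yoneda_exact₂ _ hT3 f
      (ih ((Triangle.mk (F.map i) g h).rotate.rotate.rotate.mor₁ ≫ f))
    have hmem : (F.A i)⟦(1 : ℤ)⟧ ∈ σ.P (F.phase i + 1) :=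
      (σ.P_shift _ _).mpr ⟨F.A i, F.A_mem i, ⟨Iso.refl _⟩⟩
    rw [hk, σ.hom_vanishing (hψ i) hmem hB k]; exact comp_zero

/-- If a nonzero object `E` lies in `P ψ`, then any HN filtration of it has only one step,
with phase `ψ`. -/
lemma n_eq_one_of_mem {E : C} {ψ : ℝ} (hEP : E ∈ σ.P ψ) (hE : ¬ IsZero E)
    (F : HNFiltration C σ.P E) : F.n = 1 ∧ ∀ i : Fin F.n, F.phase i = ψ := by
  have hphase_le : ∀ i : Fin F.n, F.phase i ≤ F.phase ⟨0, F.npos⟩ := by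
    intro i
    rcases Nat.eq_zero_or_pos i.1 with h | h
    · exact le_of_eq (congrArg F.phase (Fin.ext h))
    · exact (F.phase_anti (show (⟨0, F.npos⟩ : Fin F.n) < i from h)).le
  have hle_phase : ∀ i : Fin F.n,
      F.phase ⟨F.n - 1, Nat.sub_lt F.npos one_pos⟩ ≤ F.phase i := by
    intro i
    have hi : i.1 ≤ F.n - 1 := Nat.le_sub_one_of_lt i.isLt
    rcases lt_or_eq_of_le hi with h | h
    · exact (F.phase_anti (show i < (⟨F.n - 1, Nat.sub_lt F.npos one_pos⟩ : Fin F.n) from h)).le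
    · exact le_of_eq (congrArg F.phase (Fin.ext h.symm))
  -- a nonzero morphism from the top HN factor to each filtration object
  have key : ∀ j : Fin (F.n + 1), 0 < j.1 →
      ∃ c : F.A ⟨0, F.npos⟩ ⟶ F.obj j, c ≠ 0 := by
    intro j
    induction j using Fin.induction with
    | zero => intro h; exact absurd h (lt_irrefl 0)
    | succ i ih =>
      intro _
      by_cases hi : i.1 = 0
      · have hij0 : i = ⟨0, F.npos⟩ := Fin.ext hi
        subst hij0
        obtain ⟨g, h, hT⟩ := F.distinguished ⟨0, F.npos⟩
        have hc : (⟨0, F.npos⟩ : Fin F.n).castSucc = (0 : Fin (F.n + 1)) := Fin.ext (by simp)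
        have hz : IsZero (F.obj (⟨0, F.npos⟩ : Fin F.n).castSucc) := by
          rw [hc]; exact F.obj_zero
        have hh : h = 0 := ((shiftFunctor C (1 : ℤ)).map_isZero hz).eq_of_tgt h 0
        obtain ⟨s, hs⟩ := Pretriangulated.Triangle.coyoneda_exact₂ _ (rot_of_distTriang _ hT)
          (𝟙 (F.A ⟨0, F.npos⟩)) (by simp [Triangle.rotate, hh]; exact (Category.id_comp _).trans hh)
        refine ⟨s, fun hs0 => F.A_nonzero ⟨0, F.npos⟩ ((IsZero.iff_id_eq_zero _).mpr ?_)⟩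
        rw [hs, hs0]; exact zero_comp
      · obtain ⟨c, hc⟩ := ih (by simpa using Nat.pos_of_ne_zero hi)
        obtain ⟨g, h, hT⟩ := F.distinguished i
        refine ⟨c ≫ F.map i, fun h0 => ?_⟩
        obtain ⟨l, hl⟩ := Pretriangulated.Triangle.coyoneda_exact₂ _
          (inv_rot_of_distTriang _ hT) c h0
        have hmem : F.A i ∈ σ.P ((F.phase i - 1) + 1) := by
          rw [sub_add_cancel]; exact F.A_mem i
        obtain ⟨F', hF', ⟨e⟩⟩ := (σ.P_shift _ _).mp hmem
        have e2 : (F.A i)⟦(-1 : ℤ)⟧ ≅ F' :=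
          (shiftFunctor C (-1 : ℤ)).mapIso e ≪≫ shiftShiftNeg F' 1
        have hlt : F.phase i - 1 < F.phase ⟨0, F.npos⟩ := by
          have := hphase_le i; linarith
        have hl2 : l ≫ e2.hom = 0 :=
          σ.hom_vanishing hlt (F.A_mem ⟨0, F.npos⟩) hF' _
        have hl0 : l = 0 := comp_iso_hom_eq_zero e2 l hl2
        exact hc (by rw [hl, hl0]; exact zero_comp)
  -- upper bound : phase of the top factor is at most ψ
  obtain ⟨c, hc⟩ := key (Fin.last F.n) F.npos
  have hub : F.phase ⟨0, F.npos⟩ ≤ ψ := by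
    by_contra hlt
    push_neg at hlt
    have h0 : c ≫ eqToHom F.obj_last = 0 :=
      σ.hom_vanishing hlt (F.A_mem ⟨0, F.npos⟩) hEP _
    apply hc
    have := congrArg (· ≫ eqToHom F.obj_last.symm) h0
    simpa using this
  -- lower bound : ψ is at most the phase of the bottom factor
  have hlb : ψ ≤ F.phase ⟨F.n - 1, Nat.sub_lt F.npos one_pos⟩ := by
    obtain ⟨g, h, hT⟩ := F.distinguished ⟨F.n - 1, Nat.sub_lt F.npos one_pos⟩
    have hsucc : F.obj (⟨F.n - 1, Nat.sub_lt F.npos one_pos⟩ : Fin F.n).succ = E := by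
      have hlast : (⟨F.n - 1, Nat.sub_lt F.npos one_pos⟩ : Fin F.n).succ = Fin.last F.n := by
        have := F.npos
        apply Fin.ext; simp; omega
      rw [hlast, F.obj_last]
    have hg : g ≠ 0 := by
      intro hg0
      obtain ⟨l, hl⟩ := Pretriangulated.Triangle.yoneda_exact₂ _ (rot_of_distTriang _ hT)
        (𝟙 (F.A ⟨F.n - 1, Nat.sub_lt F.npos one_pos⟩)) (by simp [Triangle.rotate, hg0]; exact zero_comp)
      have hl0 : l = 0 :=
        hom_from_obj_shift_zero F (F.A_mem _) (fun i => by have := hle_phase i; linarith)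
          (⟨F.n - 1, Nat.sub_lt F.npos one_pos⟩ : Fin F.n).castSucc l
      exact F.A_nonzero _ ((IsZero.iff_id_eq_zero _).mpr (by rw [hl, hl0]; exact comp_zero))
    by_contra hlt
    push_neg at hlt
    apply hg
    have h0 : eqToHom hsucc.symm ≫ g = 0 :=
      σ.hom_vanishing hlt hEP (F.A_mem _) _
    have := congrArg (eqToHom hsucc ≫ ·) h0
    simpa using this
  have hn : F.n = 1 := by
    by_contra hn1
    have h2 : 1 < F.n := by have := F.npos; omega
    have hlt : (⟨0, F.npos⟩ : Fin F.n) < ⟨F.n - 1, Nat.sub_lt F.npos one_pos⟩ := by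
      simp only [Fin.lt_def]; omega
    have := F.phase_anti hlt
    linarith
  refine ⟨hn, fun i => ?_⟩
  have hi0 : i = ⟨0, F.npos⟩ := Fin.ext (by have := i.isLt; omega)
  have hjl : (⟨F.n - 1, Nat.sub_lt F.npos one_pos⟩ : Fin F.n) = ⟨0, F.npos⟩ :=
    Fin.ext (by omega)
  rw [hi0]
  exact le_antisymm hub (by rw [← hjl]; exact hlb)

/-- An object with a one-step HN filtration is semistable of the corresponding phase. -/
lemma mem_P_of_n_eq_one {E : C} (F : HNFiltration C σ.P E) (hn : F.n = 1) :
    E ∈ σ.P (F.phase ⟨0, F.npos⟩) := by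
  obtain ⟨g, h, hT⟩ := F.distinguished ⟨0, F.npos⟩
  have hc : (⟨0, F.npos⟩ : Fin F.n).castSucc = (0 : Fin (F.n + 1)) := Fin.ext (by simp)
  have hz : IsZero (F.obj (⟨0, F.npos⟩ : Fin F.n).castSucc) := by
    rw [hc]; exact F.obj_zero
  have hh : h = 0 := ((shiftFunctor C (1 : ℤ)).map_isZero hz).eq_of_tgt h 0
  obtain ⟨s, hs⟩ : ∃ s : F.A ⟨0, F.npos⟩ ⟶ F.obj (⟨0, F.npos⟩ : Fin F.n).succ, 𝟙 _ = s ≫ g :=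
    Pretriangulated.Triangle.coyoneda_exact₂ _ (rot_of_distTriang _ hT)
    (𝟙 (F.A ⟨0, F.npos⟩)) (by simp [Triangle.rotate, hh]; exact (Category.id_comp _).trans hh)
  have hs' : s ≫ g = 𝟙 (F.A ⟨0, F.npos⟩) := hs.symm
  have hfz : F.map ⟨0, F.npos⟩ = 0 := hz.eq_of_src _ 0
  obtain ⟨l, hl⟩ := Pretriangulated.Triangle.coyoneda_exact₂ _ hT
    (g ≫ s - 𝟙 _) (by show (g ≫ s - 𝟙 _) ≫ g = 0; simp [Preadditive.sub_comp, Category.assoc, hs'])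
  have hsub : g ≫ s - 𝟙 _ = 0 := by refine hl.trans ?_; show l ≫ F.map _ = 0; rw [hfz]; exact comp_zero
  have hgs : g ≫ s = 𝟙 _ := by rwa [sub_eq_zero] at hsub
  have e : F.obj (⟨0, F.npos⟩ : Fin F.n).succ ≅ F.A ⟨0, F.npos⟩ :=
    ⟨g, s, hgs, hs'⟩
  have hsucc : F.obj (⟨0, F.npos⟩ : Fin F.n).succ = E := by
    have hlast : (⟨0, F.npos⟩ : Fin F.n).succ = Fin.last F.n := Fin.ext (by simp [hn])
    rw [hlast, F.obj_last]
  exact σ.P_isoClosed _ (e.symm ≪≫ eqToIso hsucc) (F.A_mem ⟨0, F.npos⟩)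

/-- Characterization of membership in `P φ` for nonzero objects via the extremal phases. -/
lemma mem_P_iff (σ : StabilityCondition C) {E : C} (hE : ¬ IsZero E) (φ : ℝ) :
    E ∈ σ.P φ ↔ σ.phiPlus E = φ ∧ σ.phiMinus E = φ := by
  constructor
  · intro hEP
    obtain ⟨hn, hph⟩ := n_eq_one_of_mem hEP hE (σ.HN E hE).some
    constructor
    · simp only [StabilityCondition.phiPlus]; rw [dif_pos hE]; exact hph _
    · simp only [StabilityCondition.phiMinus]; rw [dif_pos hE]; exact hph _
  · rintro ⟨hp, hm⟩
    simp only [StabilityCondition.phiPlus] at hp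
    simp only [StabilityCondition.phiMinus] at hm
    rw [dif_pos hE] at hp hm
    have hn : (σ.HN E hE).some.n = 1 := by
      by_contra hn1
      have h2 : 1 < (σ.HN E hE).some.n := by have := (σ.HN E hE).some.npos; omega
      have hlt : (⟨0, (σ.HN E hE).some.npos⟩ : Fin (σ.HN E hE).some.n) <
          ⟨(σ.HN E hE).some.n - 1, Nat.sub_lt (σ.HN E hE).some.npos one_pos⟩ := by
        simp only [Fin.lt_def]; omega
      have := (σ.HN E hE).some.phase_anti hlt
      rw [hp, hm] at this
      exact lt_irrefl φ this
    have := mem_P_of_n_eq_one (σ.HN E hE).some hn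
    rwa [hp] at this

lemma abs_exp_eq_one (φ : ℝ) :
    ‖Complex.exp ((Real.pi * φ : ℝ) * Complex.I)‖ = 1 := by
  rw [Complex.norm_exp]
  simp [Complex.mul_I_re]

lemma abs_Z_pos (σ : StabilityCondition C) {A : C} {φ : ℝ} (hA : A ∈ σ.P φ)
    (hA0 : ¬ IsZero A) : 0 < ‖σ.Z A‖ := by
  obtain ⟨m, hm, hZ⟩ := σ.P_phase φ A hA hA0
  rw [hZ, norm_mul, abs_exp_eq_one, mul_one, Complex.norm_real, Real.norm_eq_abs, abs_of_pos hm]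
  exact hm

lemma mass_pos (σ : StabilityCondition C) {E : C} (hE : ¬ IsZero E) : 0 < σ.mass E := by
  simp only [StabilityCondition.mass]
  rw [dif_pos hE]
  have : Nonempty (Fin (σ.HN E hE).some.n) := ⟨⟨0, (σ.HN E hE).some.npos⟩⟩
  exact Finset.sum_pos
    (fun j _ => abs_Z_pos σ ((σ.HN E hE).some.A_mem j) ((σ.HN E hE).some.A_nonzero j))
    Finset.univ_nonempty

open ZeroObject in
lemma Z_isZero (σ : StabilityCondition C) {E : C} (h : IsZero E) : σ.Z E = 0 := by
  have h0 : σ.Z (0 : C) = 0 := by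
    have := σ.Z_additive _ (Pretriangulated.contractible_distinguished (0 : C))
    exact (left_eq_add.mp this)
  rw [σ.Z_iso_invariant (h.iso (isZero_zero C)), h0]

lemma Z_eq_mass_mul (σ : StabilityCondition C) {E : C} (hE : ¬ IsZero E) {φ : ℝ}
    (hEP : E ∈ σ.P φ) :
    σ.Z E = (σ.mass E : ℂ) * Complex.exp ((Real.pi * φ : ℝ) * Complex.I) := by
  obtain ⟨m, hm, hZ⟩ := σ.P_phase φ E hEP hE
  have habs : ‖σ.Z E‖ = m := by
    rw [hZ, norm_mul, abs_exp_eq_one, mul_one, Complex.norm_real, Real.norm_eq_abs, abs_of_pos hm]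
  have hmass : σ.mass E = ‖σ.Z E‖ := by
    obtain ⟨hn, hph⟩ := n_eq_one_of_mem hEP hE (σ.HN E hE).some
    simp only [StabilityCondition.mass]
    rw [dif_pos hE]
    set F := (σ.HN E hE).some with hF
    have hsum : ∑ j, ‖σ.Z (F.A j)‖ =
        ‖σ.Z (F.A ⟨0, F.npos⟩)‖ := by
      apply Finset.sum_eq_single
      · intro b _ hb
        exact (hb (Fin.ext (by have := b.isLt; omega))).elim
      · intro h; exact absurd (Finset.mem_univ _) h
    rw [hsum]
    congr 1
    symm
    obtain ⟨g, h, hT⟩ := F.distinguished ⟨0, F.npos⟩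
    have hadd := σ.Z_additive _ hT
    have hc : (⟨0, F.npos⟩ : Fin F.n).castSucc = (0 : Fin (F.n + 1)) := Fin.ext (by simp)
    have hz : IsZero (F.obj (⟨0, F.npos⟩ : Fin F.n).castSucc) := by
      rw [hc]; exact F.obj_zero
    have hsucc : F.obj (⟨0, F.npos⟩ : Fin F.n).succ = E := by
      have hlast : (⟨0, F.npos⟩ : Fin F.n).succ = Fin.last F.n := Fin.ext (by simp [hn])
      rw [hlast, F.obj_last]
    calc σ.Z E = σ.Z (F.obj (⟨0, F.npos⟩ : Fin F.n).succ) := by rw [hsucc]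
      _ = σ.Z (F.obj (⟨0, F.npos⟩ : Fin F.n).castSucc) + σ.Z (F.A ⟨0, F.npos⟩) := hadd
      _ = σ.Z (F.A ⟨0, F.npos⟩) := by rw [Z_isZero σ hz, zero_add]
  rw [hmass, habs]
  exact hZ

lemma Z_congr (σ τ : StabilityCondition C) (hP : ∀ (φ : ℝ) (E : C), E ∈ σ.P φ ↔ E ∈ τ.P φ)
    (hm : ∀ E : C, ¬ IsZero E → σ.mass E = τ.mass E) (E : C) : σ.Z E = τ.Z E := by
  by_cases hE : IsZero E
  · rw [Z_isZero σ hE, Z_isZero τ hE]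
  · set F := (σ.HN E hE).some with hF
    have key : ∀ j : Fin (F.n + 1), σ.Z (F.obj j) = τ.Z (F.obj j) := by
      intro j
      induction j using Fin.induction with
      | zero => rw [Z_isZero σ F.obj_zero, Z_isZero τ F.obj_zero]
      | succ i ih =>
        obtain ⟨g, h, hT⟩ := F.distinguished i
        have h1 := σ.Z_additive _ hT
        have h2 := τ.Z_additive _ hT
        have hA : σ.Z (F.A i) = τ.Z (F.A i) := by
          have hσ := Z_eq_mass_mul σ (F.A_nonzero i) (F.A_mem i)
          have hτ := Z_eq_mass_mul τ (F.A_nonzero i) ((hP _ _).mp (F.A_mem i))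
          rw [hσ, hτ, hm _ (F.A_nonzero i)]
        calc σ.Z (F.obj i.succ)
            = σ.Z (F.obj i.castSucc) + σ.Z (F.A i) := h1
          _ = τ.Z (F.obj i.castSucc) + τ.Z (F.A i) := by rw [ih, hA]
          _ = τ.Z (F.obj i.succ) := h2.symm
    have := key (Fin.last F.n)
    rwa [F.obj_last] at this

lemma P_congr (σ τ : StabilityCondition C)
    (hplus : ∀ E : C, ¬ IsZero E → σ.phiPlus E = τ.phiPlus E)
    (hminus : ∀ E : C, ¬ IsZero E → σ.phiMinus E = τ.phiMinus E)
    (φ : ℝ) (E : C) : E ∈ σ.P φ ↔ E ∈ τ.P φ := by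
  by_cases hE : IsZero E
  · exact ⟨fun _ => τ.P_zero_mem φ E hE, fun _ => σ.P_zero_mem φ E hE⟩
  · rw [mem_P_iff σ hE, mem_P_iff τ hE, hplus E hE, hminus E hE]

lemma stab_ext {σ τ : StabilityCondition C} (hZ : σ.Z = τ.Z) (hP : σ.P = τ.P) : σ = τ := by
  obtain ⟨Z₁, P₁, a₁, b₁, c₁, d₁, e₁, f₁, g₁, h₁⟩ := σ
  obtain ⟨Z₂, P₂, a₂, b₂, c₂, d₂, e₂, f₂, g₂, h₂⟩ := τ
  obtain rfl : Z₁ = Z₂ := hZ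
  obtain rfl : P₁ = P₂ := hP
  rfl

lemma max3_triangle (a₁ a₂ a₃ b₁ b₂ b₃ c₁ c₂ c₃ : ℝ) :
    max |a₃ - a₁| (max |b₃ - b₁| |c₃ - c₁|) ≤
      max |a₂ - a₁| (max |b₂ - b₁| |c₂ - c₁|) +
      max |a₃ - a₂| (max |b₃ - b₂| |c₃ - c₂|) := by
  have l1 : |a₂ - a₁| ≤ max |a₂ - a₁| (max |b₂ - b₁| |c₂ - c₁|) := le_max_left _ _
  have l2 : |b₂ - b₁| ≤ max |a₂ - a₁| (max |b₂ - b₁| |c₂ - c₁|) :=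
    (le_max_left _ _).trans (le_max_right _ _)
  have l3 : |c₂ - c₁| ≤ max |a₂ - a₁| (max |b₂ - b₁| |c₂ - c₁|) :=
    (le_max_right _ _).trans (le_max_right _ _)
  have r1 : |a₃ - a₂| ≤ max |a₃ - a₂| (max |b₃ - b₂| |c₃ - c₂|) := le_max_left _ _
  have r2 : |b₃ - b₂| ≤ max |a₃ - a₂| (max |b₃ - b₂| |c₃ - c₂|) :=
    (le_max_left _ _).trans (le_max_right _ _)
  have r3 : |c₃ - c₂| ≤ max |a₃ - a₂| (max |b₃ - b₂| |c₃ - c₂|) :=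
    (le_max_right _ _).trans (le_max_right _ _)
  have t1 := abs_sub_le a₃ a₂ a₁
  have t2 := abs_sub_le b₃ b₂ b₁
  have t3 := abs_sub_le c₃ c₂ c₁
  apply max_le
  · linarith
  · apply max_le <;> linarith

end HNAux

end AuxProofs

/-- the function `d` is a generalized ([0,∞]-valued) metric on the set
`Stab(D)` of locally finite stability conditions: it is symmetric, satisfies the
triangle inequality, and vanishes exactly on the diagonal. -/
theorem statement2 :
    (∀ σ τ : Stab C, StabilityCondition.stabDist σ.1 τ.1 = StabilityCondition.stabDist τ.1 σ.1) ∧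
    (∀ σ₁ σ₂ σ₃ : Stab C, StabilityCondition.stabDist σ₁.1 σ₃.1 ≤
      StabilityCondition.stabDist σ₁.1 σ₂.1 + StabilityCondition.stabDist σ₂.1 σ₃.1) ∧
    (∀ σ τ : Stab C, StabilityCondition.stabDist σ.1 τ.1 = 0 ↔ σ = τ) := by
  refine ⟨?_, ?_, ?_⟩
  · -- symmetry
    intro σ τ
    simp only [StabilityCondition.stabDist]
    apply iSup_congr
    intro E
    congr 1
    have hmσ := (HNAux.mass_pos σ.1 E.2).ne'
    have hmτ := (HNAux.mass_pos τ.1 E.2).ne'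
    rw [Real.log_div hmτ hmσ, Real.log_div hmσ hmτ,
      abs_sub_comm (τ.1.phiMinus E.1) (σ.1.phiMinus E.1),
      abs_sub_comm (τ.1.phiPlus E.1) (σ.1.phiPlus E.1),
      abs_sub_comm (Real.log (τ.1.mass E.1)) (Real.log (σ.1.mass E.1))]
  · -- triangle inequality
    intro σ₁ σ₂ σ₃
    simp only [StabilityCondition.stabDist]
    refine iSup_le fun E => ?_
    have hm1 := (HNAux.mass_pos σ₁.1 E.2).ne'
    have hm2 := (HNAux.mass_pos σ₂.1 E.2).ne'
    have hm3 := (HNAux.mass_pos σ₃.1 E.2).ne'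
    have hR := HNAux.max3_triangle (σ₁.1.phiMinus E.1) (σ₂.1.phiMinus E.1) (σ₃.1.phiMinus E.1)
      (σ₁.1.phiPlus E.1) (σ₂.1.phiPlus E.1) (σ₃.1.phiPlus E.1)
      (Real.log (σ₁.1.mass E.1)) (Real.log (σ₂.1.mass E.1)) (Real.log (σ₃.1.mass E.1))
    rw [← Real.log_div hm3 hm1, ← Real.log_div hm2 hm1, ← Real.log_div hm3 hm2] at hR
    refine le_trans (ENNReal.ofReal_le_ofReal hR)
      (le_trans ENNReal.ofReal_add_le (add_le_add ?_ ?_))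
    · exact le_iSup (fun (F : {E : C // ¬ IsZero E}) =>
        ENNReal.ofReal (max |σ₂.1.phiMinus F.1 - σ₁.1.phiMinus F.1|
          (max |σ₂.1.phiPlus F.1 - σ₁.1.phiPlus F.1|
            |Real.log (σ₂.1.mass F.1 / σ₁.1.mass F.1)|))) E
    · exact le_iSup (fun (F : {E : C // ¬ IsZero E}) =>
        ENNReal.ofReal (max |σ₃.1.phiMinus F.1 - σ₂.1.phiMinus F.1|
          (max |σ₃.1.phiPlus F.1 - σ₂.1.phiPlus F.1|
            |Real.log (σ₃.1.mass F.1 / σ₂.1.mass F.1)|))) E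
  · -- vanishing iff equality
    intro σ τ
    constructor
    · intro h0
      simp only [StabilityCondition.stabDist] at h0
      have hterm := ENNReal.iSup_eq_zero.mp h0
      have hkey : ∀ (E : C), ¬ IsZero E →
          τ.1.phiMinus E = σ.1.phiMinus E ∧ τ.1.phiPlus E = σ.1.phiPlus E ∧
          τ.1.mass E = σ.1.mass E := by
        intro E hE
        have h := hterm ⟨E, hE⟩
        rw [ENNReal.ofReal_eq_zero] at h
        have h1 : |τ.1.phiMinus E - σ.1.phiMinus E| = 0 :=
          le_antisymm ((le_max_left _ _).trans h) (abs_nonneg _)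
        have h2 : |τ.1.phiPlus E - σ.1.phiPlus E| = 0 :=
          le_antisymm (((le_max_left _ _).trans (le_max_right _ _)).trans h) (abs_nonneg _)
        have h3 : |Real.log (τ.1.mass E / σ.1.mass E)| = 0 :=
          le_antisymm (((le_max_right _ _).trans (le_max_right _ _)).trans h) (abs_nonneg _)
        refine ⟨sub_eq_zero.mp (abs_eq_zero.mp h1), sub_eq_zero.mp (abs_eq_zero.mp h2), ?_⟩
        rw [abs_eq_zero, Real.log_eq_zero] at h3
        have hq : τ.1.mass E / σ.1.mass E = 1 := by
          rcases h3 with h | h | h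
          · exact absurd h (div_ne_zero (HNAux.mass_pos τ.1 hE).ne'
              (HNAux.mass_pos σ.1 hE).ne')
          · exact h
          · nlinarith [div_pos (HNAux.mass_pos τ.1 hE) (HNAux.mass_pos σ.1 hE)]
        exact (div_eq_one_iff_eq (HNAux.mass_pos σ.1 hE).ne').mp hq
      apply Subtype.ext
      have hP : ∀ (φ : ℝ) (E : C), E ∈ σ.1.P φ ↔ E ∈ τ.1.P φ :=
        fun φ E => HNAux.P_congr σ.1 τ.1 (fun E hE => ((hkey E hE).2.1).symm)
          (fun E hE => ((hkey E hE).1).symm) φ E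
      have hZ : σ.1.Z = τ.1.Z :=
        funext (HNAux.Z_congr σ.1 τ.1 hP (fun E hE => ((hkey E hE).2.2).symm))
      have hPP : σ.1.P = τ.1.P := funext fun φ => Set.ext fun E => hP φ E
      exact HNAux.stab_ext hZ hPP
    · rintro rfl
      simp only [StabilityCondition.stabDist]
      rw [ENNReal.iSup_eq_zero]
      intro E
      rw [div_self (HNAux.mass_pos σ.1 E.2).ne', Real.log_one]
      simp
end

section
/- Let D be a triangulated category and give the set Stab(D) of locally finite stability conditions the topology induced by the generalized metric d. For every nonzero object E ∈ D, the subset { σ ∈ Stab(D) : E is semistable in σ } is closed in Stab(D). Equivalently, a nonzero object E is semistable in σ precisely when φ⁺_σ(E) = φ⁻_σ(E), and the set where this equality holds is closed. -/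
/-!
Basic definitions: Bridgeland stability conditions on a triangulated category.

The Grothendieck group `K(D)` is encoded implicitly: a group homomorphism `K(D) → ℂ`
is the same thing as a function on objects which is invariant under isomorphism and
additive on distinguished triangles.
-/

open CategoryTheory CategoryTheory.Limits CategoryTheory.Pretriangulated
open scoped ENNReal Classical

universe v u

variable (C : Type u) [Category.{v} C] [HasZeroObject C] [HasShift C ℤ]
  [Preadditive C] [∀ n : ℤ, (CategoryTheory.shiftFunctor C n).Additive] [Pretriangulated C]

section Aux

variable {C}

namespace HNFiltration

lemma phase_last_le {P : ℝ → Set C} {X : C} (F : HNFiltration C P X) (i : Fin F.n) :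
    F.phase ⟨F.n - 1, Nat.sub_lt F.npos one_pos⟩ ≤ F.phase i := by
  rcases lt_or_eq_of_le (show i.1 ≤ F.n - 1 by have := i.2; omega) with hlt | heq
  · exact le_of_lt (F.phase_anti (by simpa [Fin.lt_def] using hlt))
  · have : (⟨F.n - 1, Nat.sub_lt F.npos one_pos⟩ : Fin F.n) = i := Fin.ext heq.symm
    rw [this]

lemma le_phase_first {P : ℝ → Set C} {X : C} (F : HNFiltration C P X) (i : Fin F.n) :
    F.phase i ≤ F.phase ⟨0, F.npos⟩ := by
  rcases Nat.eq_zero_or_pos i.1 with h0 | hpos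
  · exact le_of_eq (congrArg F.phase (Fin.ext h0))
  · exact le_of_lt (F.phase_anti
      (show (⟨0, F.npos⟩ : Fin F.n) < i by simpa [Fin.lt_def] using hpos))

end HNFiltration

namespace StabilityCondition

lemma mem_P_shift_up (σ : StabilityCondition C) {φ : ℝ} {X : C} (hX : X ∈ σ.P φ) :
    X⟦(1 : ℤ)⟧ ∈ σ.P (φ + 1) :=
  (σ.P_shift φ _).mpr ⟨X, hX, ⟨Iso.refl _⟩⟩

lemma mem_P_shift_down (σ : StabilityCondition C) {φ : ℝ} {X : C} (hX : X ∈ σ.P φ) :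
    X⟦(-1 : ℤ)⟧ ∈ σ.P (φ - 1) := by
  obtain ⟨F, hF, ⟨e⟩⟩ := (σ.P_shift (φ - 1) X).mp
    (by rw [show φ - 1 + 1 = φ by ring]; exact hX)
  exact σ.P_isoClosed _ (((shiftFunctor C (-1 : ℤ)).mapIso e ≪≫
    (shiftFunctorCompIsoId C (1 : ℤ) (-1) (by ring)).app F).symm) hF

/-- Any map from a shifted filtration stage `(F.obj j)⟦1⟧` into a semistable object of
phase `φ` vanishes, provided `φ < φᵢ + 1` for all phases `φᵢ` of the filtration. -/
lemma hom_from_filt_shift (σ : StabilityCondition C) {X B : C} {φ : ℝ} (hB : B ∈ σ.P φ)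
    (F : HNFiltration C σ.P X) (hφ : ∀ i : Fin F.n, φ < F.phase i + 1) :
    ∀ (j : Fin (F.n + 1)) (f : (F.obj j)⟦(1 : ℤ)⟧ ⟶ B), f = 0 := by
  intro j
  induction j using Fin.induction with
  | zero =>
    intro f
    exact ((shiftFunctor C (1 : ℤ)).map_isZero F.obj_zero).eq_zero_of_src f
  | succ i ih =>
    intro f
    obtain ⟨g, h, hT⟩ := F.distinguished i
    have hT3 := rot_of_distTriang _ (rot_of_distTriang _ (rot_of_distTriang _ hT))
    obtain ⟨k, hk⟩ := Triangle.yoneda_exact₂ _ hT3 f (ih _)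
    have hk0 : k = 0 := σ.hom_vanishing (hφ i) (σ.mem_P_shift_up (F.A_mem i)) hB k
    rw [hk, hk0, comp_zero]
    rfl

/-- The first stage `F.obj 1` of a HN filtration is semistable of the top phase, and
nonzero. -/
lemma obj_one_mem (σ : StabilityCondition C) {X : C} (F : HNFiltration C σ.P X) :
    F.obj ⟨1, Nat.succ_lt_succ F.npos⟩ ∈ σ.P (F.phase ⟨0, F.npos⟩) ∧
    ¬ IsZero (F.obj ⟨1, Nat.succ_lt_succ F.npos⟩) := by
  obtain ⟨g, h, hT⟩ := F.distinguished ⟨0, F.npos⟩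
  have hz : IsZero (F.obj (Fin.castSucc ⟨0, F.npos⟩)) := by
    have e0 : (Fin.castSucc (⟨0, F.npos⟩ : Fin F.n)) = (0 : Fin (F.n + 1)) := by
      ext; simp
    rw [e0]; exact F.obj_zero
  have hh : h = 0 := ((shiftFunctor C (1 : ℤ)).map_isZero hz).eq_zero_of_tgt h
  obtain ⟨t, ht⟩ := Triangle.coyoneda_exact₂ _ (rot_of_distTriang _ hT)
    (𝟙 (F.A ⟨0, F.npos⟩)) (by show 𝟙 _ ≫ h = 0; rw [hh, comp_zero])
  have key : ∃ t' : F.A ⟨0, F.npos⟩ ⟶ F.obj (Fin.succ ⟨0, F.npos⟩),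
      𝟙 (F.A ⟨0, F.npos⟩) = t' ≫ g := ⟨t, ht⟩
  obtain ⟨t', ht'⟩ := key
  have hu : (g ≫ t' - 𝟙 (F.obj (Fin.succ ⟨0, F.npos⟩))) ≫ g = 0 := by
    rw [Preadditive.sub_comp, Category.assoc, ← ht']
    simp
  obtain ⟨v, hv⟩ := Triangle.coyoneda_exact₂ _ hT _ hu
  have hv0 : v = 0 := hz.eq_zero_of_tgt v
  have hgt : g ≫ t' = 𝟙 _ := by
    rw [← sub_eq_zero, hv, hv0, zero_comp]
    rfl
  have e : F.obj (Fin.succ ⟨0, F.npos⟩) ≅ F.A ⟨0, F.npos⟩ :=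
    ⟨g, t', hgt, ht'.symm⟩
  constructor
  · exact σ.P_isoClosed _ e.symm (F.A_mem ⟨0, F.npos⟩)
  · intro hzz
    exact F.A_nonzero ⟨0, F.npos⟩ (hzz.of_iso e.symm)

/-- If `E` is semistable (of some phase `ψ`), then in any HN filtration of `E` the first
and last phases coincide. -/
lemma phase_eq_of_semistable (σ : StabilityCondition C) {E : C} {ψ : ℝ} (hmem : E ∈ σ.P ψ)
    (F : HNFiltration C σ.P E) :
    F.phase ⟨0, F.npos⟩ = F.phase ⟨F.n - 1, Nat.sub_lt F.npos one_pos⟩ := by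
  by_contra hne
  have hnpos := F.npos
  have hn2 : 2 ≤ F.n := by
    by_contra hn
    exact hne (congrArg F.phase (Fin.ext (by simp; omega)))
  have hlt : F.phase ⟨F.n - 1, Nat.sub_lt F.npos one_pos⟩ < F.phase ⟨0, F.npos⟩ :=
    F.phase_anti (by simp [Fin.lt_def]; omega)
  rcases lt_or_ge (F.phase ⟨F.n - 1, Nat.sub_lt F.npos one_pos⟩) ψ with hψ | hψ
  · -- the projection `E → A_n` is nonzero, contradicting `ψ > φ_n`
    set ℓ : Fin F.n := ⟨F.n - 1, Nat.sub_lt F.npos one_pos⟩ with hℓ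
    obtain ⟨g, h, hT⟩ := F.distinguished ℓ
    have hsucc : F.obj ℓ.succ = E := by
      rw [show ℓ.succ = Fin.last F.n from Fin.ext (by simp [hℓ]; omega)]
      exact F.obj_last
    have hg : g = 0 := σ.hom_vanishing hψ (show F.obj ℓ.succ ∈ σ.P ψ by rw [hsucc]; exact hmem) (F.A_mem ℓ) g
    obtain ⟨k, hk⟩ := Triangle.yoneda_exact₂ _ (rot_of_distTriang _ hT)
      (𝟙 (F.A ℓ)) (by show g ≫ 𝟙 _ = 0; rw [hg, zero_comp])
    have hk0 : k = 0 := σ.hom_from_filt_shift (F.A_mem ℓ) F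
      (fun i => lt_of_le_of_lt (F.phase_last_le i) (lt_add_one _)) ℓ.castSucc k
    have hid : 𝟙 (F.A ℓ) = 0 := by rw [hk, hk0, comp_zero]; rfl
    exact F.A_nonzero ℓ ((IsZero.iff_id_eq_zero _).mpr hid)
  · -- the inclusion `A_1 ≅ E_1 → E` is nonzero, contradicting `ψ < φ_1`
    have hψ0 : ψ < F.phase ⟨0, F.npos⟩ := lt_of_le_of_lt hψ hlt
    obtain ⟨h1, h2⟩ := σ.obj_one_mem F
    have key : ∀ j, 1 ≤ j → ∀ (hj : j ≤ F.n),
        ∃ u : F.obj ⟨1, Nat.succ_lt_succ F.npos⟩ ⟶ F.obj ⟨j, Nat.lt_succ_of_le hj⟩,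
          u ≠ 0 := by
      intro j
      induction j with
      | zero => intro h1j; exact absurd h1j (by omega)
      | succ j ih =>
        intro _ hj
        rcases Nat.eq_zero_or_pos j with rfl | hjpos
        · exact ⟨𝟙 _, fun h0 => h2 ((IsZero.iff_id_eq_zero _).mpr h0)⟩
        · obtain ⟨u, hu⟩ := ih hjpos (le_of_lt (Nat.lt_of_succ_le hj))
          refine ⟨u ≫ F.map ⟨j, Nat.lt_of_succ_le hj⟩, fun h0 => ?_⟩
          obtain ⟨g, h, hT⟩ := F.distinguished ⟨j, Nat.lt_of_succ_le hj⟩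
          obtain ⟨v, hv⟩ := Triangle.coyoneda_exact₂ _ (inv_rot_of_distTriang _ hT) u
            (show u ≫ F.map ⟨j, Nat.lt_of_succ_le hj⟩ = 0 from h0)
          have hv0 : v = 0 := σ.hom_vanishing
            (show F.phase ⟨j, Nat.lt_of_succ_le hj⟩ - 1 < F.phase ⟨0, F.npos⟩ from by
              have := F.le_phase_first ⟨j, Nat.lt_of_succ_le hj⟩; linarith)
            h1 (σ.mem_P_shift_down (F.A_mem ⟨j, Nat.lt_of_succ_le hj⟩)) v
          exact hu (by rw [hv, hv0, zero_comp]; rfl)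
    obtain ⟨u, hu⟩ := key F.n F.npos le_rfl
    have hlast : F.obj ⟨F.n, Nat.lt_succ_of_le le_rfl⟩ = E := F.obj_last
    refine hu ?_
    have hz0 : u ≫ eqToHom hlast = 0 := σ.hom_vanishing hψ0 h1 hmem (u ≫ eqToHom hlast)
    calc u = (u ≫ eqToHom hlast) ≫ eqToHom hlast.symm := by simp
      _ = 0 := by rw [hz0, zero_comp]

/-- If the first and last HN phases of a filtration of `E` coincide, then `E` is
semistable. -/
lemma mem_of_first_eq_last (σ : StabilityCondition C) {E : C} (F : HNFiltration C σ.P E)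
    (h : F.phase ⟨0, F.npos⟩ = F.phase ⟨F.n - 1, Nat.sub_lt F.npos one_pos⟩) :
    E ∈ σ.P (F.phase ⟨0, F.npos⟩) := by
  have hnpos := F.npos
  have hn1 : F.n = 1 := by
    by_contra hn
    exact absurd h (ne_of_gt (F.phase_anti (by simp [Fin.lt_def]; omega)))
  obtain ⟨h1, -⟩ := σ.obj_one_mem F
  have e1 : (⟨1, Nat.succ_lt_succ F.npos⟩ : Fin (F.n + 1)) = Fin.last F.n :=
    Fin.ext (by simp [Fin.last]; omega)
  have heq : F.obj ⟨1, Nat.succ_lt_succ F.npos⟩ = E := by rw [e1]; exact F.obj_last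
  exact σ.P_isoClosed _ (eqToIso heq) h1

/-- Semistability is equivalent to the equality `φ⁺ = φ⁻`. -/
lemma semistable_iff_phiPlus_eq_phiMinus (σ : StabilityCondition C) (E : C)
    (hE : ¬ IsZero E) :
    (∃ φ : ℝ, E ∈ σ.P φ) ↔ σ.phiPlus E = σ.phiMinus E := by
  constructor
  · rintro ⟨ψ, hψ⟩
    unfold StabilityCondition.phiPlus StabilityCondition.phiMinus
    rw [dif_pos hE, dif_pos hE]
    exact σ.phase_eq_of_semistable hψ _
  · intro hpm
    unfold StabilityCondition.phiPlus StabilityCondition.phiMinus at hpm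
    rw [dif_pos hE, dif_pos hE] at hpm
    exact ⟨_, σ.mem_of_first_eq_last (σ.HN E hE).some hpm⟩

lemma phiMinus_le_phiPlus (σ : StabilityCondition C) (E : C) :
    σ.phiMinus E ≤ σ.phiPlus E := by
  unfold StabilityCondition.phiPlus StabilityCondition.phiMinus
  by_cases h : ¬ IsZero E
  · rw [dif_pos h, dif_pos h]
    exact ((σ.HN E h).some).le_phase_first _
  · rw [dif_neg h, dif_neg h]

lemma stabDist_self (σ : StabilityCondition C) : stabDist σ σ = 0 := by
  unfold stabDist
  refine le_antisymm (iSup_le fun X => ?_) zero_le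
  have hm : |Real.log (σ.mass X.1 / σ.mass X.1)| = 0 := by
    rcases eq_or_ne (σ.mass X.1) 0 with h | h
    · simp [h]
    · simp [div_self h]
  simp [hm]

end StabilityCondition

end Aux

/-- for every nonzero object `E`, the set of locally finite stability
conditions in which `E` is semistable is closed in `Stab(D)`; equivalently `E` is
semistable in `σ` precisely when `φ⁺_σ(E) = φ⁻_σ(E)`, and the set where this equality
holds is closed. -/
theorem statement3 (E : C) (hE : ¬ IsZero E) :
    (∀ σ : Stab C, (∃ φ : ℝ, E ∈ σ.1.P φ) ↔
      StabilityCondition.phiPlus σ.1 E = StabilityCondition.phiMinus σ.1 E) ∧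
    IsClosed {σ : Stab C | ∃ φ : ℝ, E ∈ σ.1.P φ} := by
  have main : ∀ σ : StabilityCondition C,
      (∃ φ : ℝ, E ∈ σ.P φ) ↔ σ.phiPlus E = σ.phiMinus E := fun σ =>
    σ.semistable_iff_phiPlus_eq_phiMinus E hE
  refine ⟨fun σ => main σ.1, ?_⟩
  rw [← isOpen_compl_iff, isOpen_iff_forall_mem_open]
  rintro σ hσ
  have hne : σ.1.phiPlus E ≠ σ.1.phiMinus E := fun h => hσ ((main σ.1).mpr h)
  have hlt : σ.1.phiMinus E < σ.1.phiPlus E :=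
    lt_of_le_of_ne (σ.1.phiMinus_le_phiPlus E) (Ne.symm hne)
  set δ := (σ.1.phiPlus E - σ.1.phiMinus E) / 2 with hδdef
  have hδ : 0 < δ := by rw [hδdef]; linarith
  refine ⟨{τ : Stab C | StabilityCondition.stabDist σ.1 τ.1 < ENNReal.ofReal δ},
    ?_, ?_, ?_⟩
  · rintro τ hτ hmemS
    have hEq := (main τ.1).mp hmemS
    have hterm : ENNReal.ofReal (max |τ.1.phiMinus E - σ.1.phiMinus E|
        (max |τ.1.phiPlus E - σ.1.phiPlus E|
          |Real.log (τ.1.mass E / σ.1.mass E)|)) < ENNReal.ofReal δ :=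
      lt_of_le_of_lt (le_iSup (fun X : {E : C // ¬ IsZero E} =>
        ENNReal.ofReal (max |τ.1.phiMinus X.1 - σ.1.phiMinus X.1|
          (max |τ.1.phiPlus X.1 - σ.1.phiPlus X.1|
            |Real.log (τ.1.mass X.1 / σ.1.mass X.1)|))) ⟨E, hE⟩) hτ
    rw [ENNReal.ofReal_lt_ofReal_iff hδ] at hterm
    have h1 : |τ.1.phiMinus E - σ.1.phiMinus E| < δ :=
      lt_of_le_of_lt (le_max_left _ _) hterm
    have h2 : |τ.1.phiPlus E - σ.1.phiPlus E| < δ :=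
      lt_of_le_of_lt (le_trans (le_max_left _ _) (le_max_right _ _)) hterm
    rw [abs_lt] at h1 h2
    have hle := τ.1.phiMinus_le_phiPlus E
    linarith [h1.1, h1.2, h2.1, h2.2]
  · exact TopologicalSpace.isOpen_generateFrom_of_mem
      ⟨σ, ENNReal.ofReal δ, ENNReal.ofReal_pos.mpr hδ, rfl⟩
  · show StabilityCondition.stabDist σ.1 σ.1 < ENNReal.ofReal δ
    rw [StabilityCondition.stabDist_self]
    exact ENNReal.ofReal_pos.mpr hδ
end

section
/- Let D be a triangulated category and let G̃ be the group of pairs (T, f) where f : ℝ → ℝ is an increasing map with f(φ+1) = f(φ)+1 and T : ℝ² → ℝ² is an orientation-preserving linear isomorphism, such that the induced maps on S¹ = ℝ/2ℤ = (ℝ²∖{0})/ℝ_{>0} agree (this group is the universal covering group of GL⁺(2, ℝ)). Then: (1) the assignment sending a locally finite stability condition σ = (Z, P) and a pair (T, f) ∈ G̃ to σ′ = (T⁻¹ ∘ Z, P′) with P′(φ) = P(f(φ)) (viewing Z as valued in ℝ² ≅ ℂ) is a well-defined right action of G̃ on Stab(D); (2) the assignment sending an exact autoequivalence Φ of D and σ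 = (Z, P) to Φ(σ) = (Z ∘ φ⁻¹, P′) with P′(t) = Φ(P(t)), where φ is the automorphism of K(D) induced by Φ, is a well-defined left action of the group Aut(D) of exact autoequivalences on Stab(D); and (3) these two actions commute. -/
/-!
Basic definitions: Bridgeland stability conditions on a triangulated category.

The Grothendieck group `K(D)` is encoded implicitly: a group homomorphism `K(D) → ℂ`
is the same thing as a function on objects which is invariant under isomorphism and
additive on distinguished triangles.
-/

open CategoryTheory CategoryTheory.Limits CategoryTheory.Pretriangulated
open scoped ENNReal Classical

universe v u

variable (C : Type u) [Category.{v} C] [HasZeroObject C] [HasShift C ℤ]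
  [Preadditive C] [∀ n : ℤ, (CategoryTheory.shiftFunctor C n).Additive] [Pretriangulated C]

/-- A pair `(T, f)` in the universal cover of `GL⁺(2, ℝ)`: `f` is an increasing map with
`f(φ+1) = f(φ)+1`, `T` is an orientation-preserving linear automorphism of `ℝ²`, and the
induced maps on `S¹ = (ℝ²∖{0})/ℝ_{>0} = ℝ/2ℤ` agree. -/
def GAdmissible (T : (ℝ × ℝ) ≃ₗ[ℝ] ℝ × ℝ) (f : ℝ → ℝ) : Prop :=
  Monotone f ∧ (∀ φ : ℝ, f (φ + 1) = f φ + 1) ∧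
  0 < LinearMap.det (T : (ℝ × ℝ) →ₗ[ℝ] ℝ × ℝ) ∧
  ∀ φ : ℝ, ∃ r : ℝ, 0 < r ∧
    T (Real.cos (Real.pi * φ), Real.sin (Real.pi * φ)) =
      r • (Real.cos (Real.pi * f φ), Real.sin (Real.pi * f φ))

/-- `σ' = σ · (T, f)`: the right action of the universal cover of `GL⁺(2,ℝ)`,
`Z' = T⁻¹ ∘ Z` (viewing `Z` as valued in `ℝ² ≅ ℂ`) and `P'(φ) = P(f(φ))`. -/
def IsGAct (σ : StabilityCondition C) (T : (ℝ × ℝ) ≃ₗ[ℝ] ℝ × ℝ) (f : ℝ → ℝ)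
    (σ' : StabilityCondition C) : Prop :=
  (∀ E : C, σ'.Z E = Complex.equivRealProdLm.symm (T.symm (Complex.equivRealProdLm (σ.Z E)))) ∧
  ∀ φ : ℝ, σ'.P φ = σ.P (f φ)

/-- `σ' = Φ(σ)`: the left action of an autoequivalence `Φ`, with `Z' = Z ∘ φ⁻¹` for the
induced automorphism `φ` of `K(D)` and `P'(t) = Φ(P(t))` (as strictly full
subcategories, `E ∈ P'(t) ↔ Φ⁻¹(E) ∈ P(t)`). -/
def IsAutAct (σ : StabilityCondition C) (Φ : C ≌ C) (σ' : StabilityCondition C) : Prop :=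
  (∀ E : C, σ'.Z E = σ.Z (Φ.inverse.obj E)) ∧
  ∀ (φ : ℝ) (E : C), E ∈ σ'.P φ ↔ Φ.inverse.obj E ∈ σ.P φ


/-! ### Auxiliary lemmas -/

section RealLemmas

private lemma angle_eq_of_unit_eq {a b : ℝ}
    (h1 : Real.cos (Real.pi * a) = Real.cos (Real.pi * b))
    (h2 : Real.sin (Real.pi * a) = Real.sin (Real.pi * b)) :
    ∃ k : ℤ, a = b + 2 * k := by
  have hexp : Complex.exp ((Real.pi * a : ℝ) * Complex.I)
      = Complex.exp ((Real.pi * b : ℝ) * Complex.I) := by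
    apply Complex.ext
    · rw [Complex.exp_ofReal_mul_I_re, Complex.exp_ofReal_mul_I_re]; exact h1
    · rw [Complex.exp_ofReal_mul_I_im, Complex.exp_ofReal_mul_I_im]; exact h2
  obtain ⟨n, hn⟩ := Complex.exp_eq_exp_iff_exists_int.1 hexp
  refine ⟨n, ?_⟩
  have him := congrArg Complex.im hn
  simp [Complex.add_im, Complex.mul_im] at him
  nlinarith [him, Real.pi_pos]

private lemma magnitude_cancel {r s a b : ℝ} (hr : 0 < r) (hs : 0 < s)
    (h : r • ((Real.cos (Real.pi * a), Real.sin (Real.pi * a)) : ℝ × ℝ)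
       = s • ((Real.cos (Real.pi * b), Real.sin (Real.pi * b)) : ℝ × ℝ)) :
    r = s ∧ ∃ k : ℤ, a = b + 2 * k := by
  have h1 : r * Real.cos (Real.pi * a) = s * Real.cos (Real.pi * b) := congrArg Prod.fst h
  have h2 : r * Real.sin (Real.pi * a) = s * Real.sin (Real.pi * b) := congrArg Prod.snd h
  have hra : Real.cos (Real.pi*a)^2 + Real.sin (Real.pi*a)^2 = 1 := by
    rw [add_comm]; exact Real.sin_sq_add_cos_sq _
  have hrb : Real.cos (Real.pi*b)^2 + Real.sin (Real.pi*b)^2 = 1 := by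
    rw [add_comm]; exact Real.sin_sq_add_cos_sq _
  have e1 : (r * Real.cos (Real.pi*a))^2 = (s * Real.cos (Real.pi*b))^2 := by rw [h1]
  have e2 : (r * Real.sin (Real.pi*a))^2 = (s * Real.sin (Real.pi*b))^2 := by rw [h2]
  have hsq : r^2 = s^2 := by nlinarith [e1, e2, hra, hrb]
  have hrs : r = s := by nlinarith
  subst hrs
  refine ⟨rfl, angle_eq_of_unit_eq ?_ ?_⟩
  · exact mul_left_cancel₀ hr.ne' h1
  · exact mul_left_cancel₀ hr.ne' h2

private lemma f_int_shift {f : ℝ → ℝ} (h1 : ∀ φ, f (φ + 1) = f φ + 1) :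
    ∀ (n : ℤ) (φ : ℝ), f (φ + n) = f φ + n := by
  have hm1 : ∀ φ, f (φ - 1) = f φ - 1 := by
    intro φ
    have := h1 (φ - 1)
    rw [sub_add_cancel] at this
    linarith
  have hnat : ∀ (n : ℕ) (φ : ℝ), f (φ + n) = f φ + n := by
    intro n
    induction n with
    | zero => simp
    | succ k ih =>
        intro φ
        push_cast
        rw [show φ + ((k : ℝ) + 1) = (φ + (k : ℕ)) + 1 by push_cast; ring, h1, ih]
        push_cast; ring
  have hneg : ∀ (n : ℕ) (φ : ℝ), f (φ - n) = f φ - n := by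
    intro n φ
    have := hnat n (φ - n)
    rw [sub_add_cancel] at this
    linarith
  intro n φ
  obtain ⟨m, hm | hm⟩ := Int.eq_nat_or_neg n
  · subst hm; push_cast; exact hnat m φ
  · subst hm
    push_cast
    rw [show φ + -(m : ℝ) = φ - m by ring, hneg]
    ring

private lemma GAdmissible.strictMono' {T : (ℝ × ℝ) ≃ₗ[ℝ] ℝ × ℝ} {f : ℝ → ℝ}
    (h : GAdmissible T f) : StrictMono f := by
  obtain ⟨hm, h1, _, hang⟩ := h
  intro x y hxy
  rcases (hm hxy.le).lt_or_eq with hlt | heq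
  · exact hlt
  exfalso
  have hy2 : y < x + 2 := by
    by_contra hge
    push_neg at hge
    have hb : f (x + 2) ≤ f y := hm hge
    have h2 : f (x + 2) = f x + 2 := by
      have := f_int_shift h1 2 x
      push_cast at this
      exact this
    linarith
  obtain ⟨r, hr, hTr⟩ := hang x
  obtain ⟨s, hs, hTs⟩ := hang y
  rw [← heq] at hTs
  have hE : s • ((Real.cos (Real.pi * x), Real.sin (Real.pi * x)) : ℝ × ℝ)
      = r • ((Real.cos (Real.pi * y), Real.sin (Real.pi * y)) : ℝ × ℝ) := by
    apply T.injective
    rw [map_smul, map_smul, hTr, hTs, smul_comm]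
  obtain ⟨-, k, hk⟩ := magnitude_cancel hs hr hE
  have hk1 : (-1 : ℝ) < (k : ℝ) := by nlinarith
  have hk2 : (k : ℝ) < 0 := by nlinarith
  have hk1' : (-1 : ℤ) < k := by exact_mod_cast hk1
  have hk2' : k < 0 := by exact_mod_cast hk2
  omega

private lemma GAdmissible.surjective' {T : (ℝ × ℝ) ≃ₗ[ℝ] ℝ × ℝ} {f : ℝ → ℝ}
    (h : GAdmissible T f) : Function.Surjective f := by
  obtain ⟨hm, h1, _, hang⟩ := h
  intro ψ
  set w : ℝ × ℝ := (Real.cos (Real.pi * ψ), Real.sin (Real.pi * ψ)) with hw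
  have hw0 : w ≠ 0 := by
    intro h0
    have hc : Real.cos (Real.pi * ψ) = 0 := congrArg Prod.fst h0
    have hs : Real.sin (Real.pi * ψ) = 0 := congrArg Prod.snd h0
    nlinarith [Real.sin_sq_add_cos_sq (Real.pi * ψ)]
  set v : ℝ × ℝ := T.symm w with hv
  have hTv : T v = w := T.apply_symm_apply w
  have hv0 : v ≠ 0 := by
    intro h0
    rw [h0, map_zero] at hTv
    exact hw0 hTv.symm
  set z : ℂ := Complex.equivRealProdLm.symm v with hz
  have hz0 : z ≠ 0 := by
    intro h0
    apply hv0
    have : Complex.equivRealProdLm z = v := by rw [hz, LinearEquiv.apply_symm_apply]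
    rw [h0, map_zero] at this
    exact this.symm
  set s : ℝ := ‖z‖ with hs
  have hspos : 0 < s := norm_pos_iff.mpr hz0
  set φ₀ : ℝ := z.arg / Real.pi with hφ₀
  have hπφ₀ : Real.pi * φ₀ = z.arg := by
    rw [hφ₀]; field_simp
  have hvz : v = (z.re, z.im) := by
    have : Complex.equivRealProdLm z = v := by rw [hz, LinearEquiv.apply_symm_apply]
    rw [← this]; rfl
  have hvpol : v = s • ((Real.cos (Real.pi * φ₀), Real.sin (Real.pi * φ₀)) : ℝ × ℝ) := by
    rw [hvz, hπφ₀]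
    have hre : s * Real.cos z.arg = z.re := Complex.norm_mul_cos_arg z
    have him : s * Real.sin z.arg = z.im := Complex.norm_mul_sin_arg z
    rw [Prod.smul_mk, smul_eq_mul, smul_eq_mul, hre, him]
  obtain ⟨r, hr, hTr⟩ := hang φ₀
  have hkey : (s * r) • ((Real.cos (Real.pi * f φ₀), Real.sin (Real.pi * f φ₀)) : ℝ × ℝ)
      = (1 : ℝ) • ((Real.cos (Real.pi * ψ), Real.sin (Real.pi * ψ)) : ℝ × ℝ) := by
    rw [one_smul, ← hw, ← hTv, hvpol, map_smul, hTr, smul_smul]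
  obtain ⟨-, k, hk⟩ := magnitude_cancel (by positivity) one_pos hkey
  refine ⟨φ₀ - 2 * k, ?_⟩
  have := f_int_shift h1 (-(2 * k)) φ₀
  push_cast at this
  have harg : φ₀ + -(2 * (k : ℝ)) = φ₀ - 2 * k := by ring
  rw [harg] at this
  rw [this, hk]
  ring

private lemma uniform_mod {f : ℝ → ℝ} (hm : Monotone f) (hs : Function.Surjective f)
    (h1 : ∀ φ, f (φ + 1) = f φ + 1) {ε : ℝ} (hε : 0 < ε) :
    ∃ δ > 0, ∀ x y : ℝ, |x - y| < δ → |f x - f y| < ε := by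
  have hcont : Continuous f := hm.continuous_of_surjective hs
  have hUC := (isCompact_Icc (a := (-1 : ℝ)) (b := 3)).uniformContinuousOn_of_continuous
    hcont.continuousOn
  rw [Metric.uniformContinuousOn_iff] at hUC
  obtain ⟨δ, hδ, hδ'⟩ := hUC ε hε
  refine ⟨min δ 1, lt_min hδ one_pos, fun x y hxy => ?_⟩
  have hxy1 : |x - y| < 1 := lt_of_lt_of_le hxy (min_le_right _ _)
  have hxyδ : |x - y| < δ := lt_of_lt_of_le hxy (min_le_left _ _)
  set n : ℤ := ⌊y⌋ with hn
  have hfr1 : (0 : ℝ) ≤ y - n := by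
    have := Int.floor_le y; linarith
  have hfr2 : y - n < 1 := by
    have := Int.lt_floor_add_one y; linarith
  have hyI : y - (n : ℝ) ∈ Set.Icc (-1 : ℝ) 3 := ⟨by linarith, by linarith⟩
  have hxI : x - (n : ℝ) ∈ Set.Icc (-1 : ℝ) 3 := by
    have h1' := abs_lt.1 hxy1
    exact ⟨by linarith [h1'.1], by linarith [h1'.2]⟩
  have hdist : dist (x - (n : ℝ)) (y - (n : ℝ)) < δ := by
    rw [Real.dist_eq]
    have : x - n - (y - n) = x - y := by ring
    rw [this]; exact hxyδ
  have hres := hδ' _ hxI _ hyI hdist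
  rw [Real.dist_eq] at hres
  have hx' : f (x - n + n) = f (x - n) + n := f_int_shift h1 n (x - n)
  have hy' : f (y - n + n) = f (y - n) + n := f_int_shift h1 n (y - n)
  rw [sub_add_cancel] at hx' hy'
  have : f x - f y = f (x - n) - f (y - n) := by rw [hx', hy']; ring
  rw [this]
  exact hres

private lemma GAdmissible.modulus {T : (ℝ × ℝ) ≃ₗ[ℝ] ℝ × ℝ} {f : ℝ → ℝ}
    (h : GAdmissible T f) {ε : ℝ} (hε : 0 < ε) :
    ∃ δ > 0, ∀ φ x : ℝ, x ∈ Set.Ioo (φ - δ) (φ + δ) →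
      f x ∈ Set.Ioo (f φ - ε) (f φ + ε) := by
  obtain ⟨δ, hδ, hmod⟩ := uniform_mod h.1 h.surjective' h.2.1 hε
  refine ⟨δ, hδ, fun φ x hx => ?_⟩
  have : |x - φ| < δ := by
    rw [abs_lt]; exact ⟨by linarith [hx.1], by linarith [hx.2]⟩
  have := hmod x φ this
  rw [abs_lt] at this
  exact ⟨by linarith [this.1], by linarith [this.2]⟩

end RealLemmas

section CategoryLemmas

variable {C}

private lemma StabilityCondition.ext' {σ₁ σ₂ : StabilityCondition C}
    (hZ : σ₁.Z = σ₂.Z) (hP : σ₁.P = σ₂.P) : σ₁ = σ₂ := by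
  cases σ₁; cases σ₂
  cases hZ; cases hP
  rfl

private lemma extClosure_mono {S S' : Set C} (h : S ⊆ S') {E : C}
    (hE : ExtClosure C S E) : ExtClosure C S' E := by
  induction hE with
  | of hE => exact ExtClosure.of (h hE)
  | zero hE => exact ExtClosure.zero hE
  | iso e _ ih => exact ExtClosure.iso e ih
  | ext T hT _ _ ih₁ ih₃ => exact ExtClosure.ext T hT ih₁ ih₃

private lemma finiteLength_mono {S S' : Set C} (h : S ⊆ S')
    (hS' : FiniteLengthQuasiAbelian C S') : FiniteLengthQuasiAbelian C S := by
  constructor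
  · refine Subrelation.wf (r := fun A E => ProperStrictSub C S' A E) ?_ hS'.1
    rintro A E ⟨hA, hE, B, f, g, hom, hB, hBnz, hdist⟩
    exact ⟨h hA, h hE, B, f, g, hom, h hB, hBnz, hdist⟩
  · refine Subrelation.wf (r := fun B E => ProperStrictQuot C S' B E) ?_ hS'.2
    rintro B E ⟨hB, hE, A, f, g, hom, hA, hAnz, hdist⟩
    exact ⟨h hB, h hE, A, f, g, hom, h hA, hAnz, hdist⟩

variable (Φ : C ≌ C) [Φ.functor.CommShift ℤ] [Φ.functor.IsTriangulated]

private lemma isZero_inv_iff (E : C) : IsZero (Φ.inverse.obj E) ↔ IsZero E := by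
  constructor
  · intro hz
    exact (Φ.functor.map_isZero hz).of_iso (Φ.counitIso.app E).symm
  · intro hz
    exact Φ.inverse.map_isZero hz

private lemma inverse_distinguished (T : Triangle C) (hT : T ∈ distTriang C) :
    ∃ (f : Φ.inverse.obj T.obj₁ ⟶ Φ.inverse.obj T.obj₂)
      (g : Φ.inverse.obj T.obj₂ ⟶ Φ.inverse.obj T.obj₃)
      (h : Φ.inverse.obj T.obj₃ ⟶ (Φ.inverse.obj T.obj₁)⟦(1 : ℤ)⟧),
      Triangle.mk f g h ∈ distTriang C := by
  obtain ⟨W, g, h, mem⟩ := distinguished_cocone_triangle (Φ.inverse.map T.mor₁)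
  have memF := Φ.functor.map_distinguished _ mem
  have comm : (Φ.functor.mapTriangle.obj
        (Triangle.mk (Φ.inverse.map T.mor₁) g h)).mor₁ ≫ (Φ.counitIso.app T.obj₂).hom
      = (Φ.counitIso.app T.obj₁).hom ≫ T.mor₁ := by
    dsimp
    exact Φ.counitIso.hom.naturality T.mor₁
  let eT := isoTriangleOfIso₁₂ _ T memF hT (Φ.counitIso.app T.obj₁)
    (Φ.counitIso.app T.obj₂) comm
  let e₃ : Φ.functor.obj W ≅ T.obj₃ := Triangle.π₃.mapIso eT
  let eW : W ≅ Φ.inverse.obj T.obj₃ := Φ.unitIso.app W ≪≫ Φ.inverse.mapIso e₃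
  refine ⟨Φ.inverse.map T.mor₁, g ≫ eW.hom, eW.inv ≫ h, ?_⟩
  refine isomorphic_distinguished _ mem _ ?_
  refine Triangle.isoMk _ _ (Iso.refl _) (Iso.refl _) eW.symm ?_ ?_ ?_
  · simp [Triangle.mk]
  · simp [Triangle.mk]
  · simp [Triangle.mk]

/-- Transport a HN filtration along an isomorphism of the top object. -/
private noncomputable def HNFiltration.ofIso' {P : ℝ → Set C} {E E' : C}
    (F : HNFiltration C P E) (e : E ≅ E') : HNFiltration C P E' := by
  classical
  let obj' : Fin (F.n + 1) → C := fun j => if j = Fin.last F.n then E' else F.obj j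
  have hlast : obj' (Fin.last F.n) = E' := if_pos rfl
  let ee : ∀ j, F.obj j ≅ obj' j := fun j =>
    if h : j = Fin.last F.n then
      eqToIso (by rw [h, F.obj_last]) ≪≫ e ≪≫
        eqToIso (show E' = obj' j by rw [h, hlast])
    else eqToIso (show F.obj j = obj' j from (if_neg h).symm)
  exact
    { n := F.n, npos := F.npos, phase := F.phase, phase_anti := F.phase_anti
      obj := obj'
      obj_zero := F.obj_zero.of_iso (ee 0).symm
      obj_last := hlast
      A := F.A, A_mem := F.A_mem, A_nonzero := F.A_nonzero
      map := fun j => (ee j.castSucc).inv ≫ F.map j ≫ (ee j.succ).hom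
      distinguished := fun j => by
        obtain ⟨g, h, mem⟩ := F.distinguished j
        refine ⟨(ee j.succ).inv ≫ g,
          h ≫ (shiftFunctor C (1 : ℤ)).map (ee j.castSucc).hom, ?_⟩
        refine isomorphic_distinguished _ mem _ ?_
        refine Triangle.isoMk _ _ (ee j.castSucc).symm (ee j.succ).symm (Iso.refl _)
          ?_ ?_ ?_
        · dsimp
          simp [Triangle.mk]
        · dsimp
          simp [Triangle.mk]
        · dsimp
          simp [Triangle.mk, ← Functor.map_comp] }

end CategoryLemmas

section Constructions

variable {C}

private lemma equivRealProdLm_mul_exp (m x : ℝ) :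
    Complex.equivRealProdLm ((m : ℂ) * Complex.exp ((x : ℝ) * Complex.I))
      = m • ((Real.cos x, Real.sin x) : ℝ × ℝ) := by
  apply Prod.ext
  · show ((m : ℂ) * Complex.exp ((x : ℝ) * Complex.I)).re
        = (m • ((Real.cos x, Real.sin x) : ℝ × ℝ)).1
    rw [Complex.mul_re, Complex.ofReal_re, Complex.ofReal_im,
      Complex.exp_ofReal_mul_I_re, Complex.exp_ofReal_mul_I_im]
    simp
  · show ((m : ℂ) * Complex.exp ((x : ℝ) * Complex.I)).im
        = (m • ((Real.cos x, Real.sin x) : ℝ × ℝ)).2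
    rw [Complex.mul_im, Complex.ofReal_re, Complex.ofReal_im,
      Complex.exp_ofReal_mul_I_re, Complex.exp_ofReal_mul_I_im]
    simp

private lemma equivRealProdLm_symm_smul (c x : ℝ) :
    Complex.equivRealProdLm.symm (c • ((Real.cos x, Real.sin x) : ℝ × ℝ))
      = (c : ℂ) * Complex.exp ((x : ℝ) * Complex.I) := by
  rw [← equivRealProdLm_mul_exp, LinearEquiv.symm_apply_apply]

/-- The stability condition `σ · (T, f)`. -/
private noncomputable def gActSC (σ : StabilityCondition C) (T : (ℝ × ℝ) ≃ₗ[ℝ] ℝ × ℝ)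
    (f : ℝ → ℝ) (hTf : GAdmissible T f) : StabilityCondition C where
  Z E := Complex.equivRealProdLm.symm (T.symm (Complex.equivRealProdLm (σ.Z E)))
  P φ := σ.P (f φ)
  Z_iso_invariant X Y e := by rw [σ.Z_iso_invariant e]
  Z_additive T' hT' := by rw [σ.Z_additive T' hT', map_add, map_add, map_add]
  P_isoClosed φ X Y e hX := σ.P_isoClosed _ e hX
  P_zero_mem φ Z₀ h0 := σ.P_zero_mem _ _ h0
  P_phase φ E hE hnz := by
    obtain ⟨m, hm, hZ⟩ := σ.P_phase (f φ) E hE hnz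
    obtain ⟨r, hr, hTr⟩ := hTf.2.2.2 φ
    refine ⟨m / r, div_pos hm hr, ?_⟩
    have h1 : Complex.equivRealProdLm (σ.Z E)
        = m • ((Real.cos (Real.pi * f φ), Real.sin (Real.pi * f φ)) : ℝ × ℝ) := by
      rw [hZ, equivRealProdLm_mul_exp]
    have h2 : T.symm ((Real.cos (Real.pi * f φ), Real.sin (Real.pi * f φ)) : ℝ × ℝ)
        = r⁻¹ • ((Real.cos (Real.pi * φ), Real.sin (Real.pi * φ)) : ℝ × ℝ) := by
      have h3 := congrArg T.symm hTr
      rw [T.symm_apply_apply, map_smul] at h3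
      rw [h3, smul_smul, inv_mul_cancel₀ hr.ne', one_smul]
    show Complex.equivRealProdLm.symm (T.symm (Complex.equivRealProdLm (σ.Z E))) = _
    rw [h1, map_smul, h2, smul_smul, equivRealProdLm_symm_smul, div_eq_mul_inv]
  P_shift φ E := by
    have h := σ.P_shift (f φ) E
    rw [← hTf.2.1 φ] at h
    exact h
  hom_vanishing φ₁ φ₂ h12 A₁ A₂ hA₁ hA₂ :=
    σ.hom_vanishing (hTf.strictMono' h12) hA₁ hA₂
  HN E hE := by
    obtain ⟨F⟩ := σ.HN E hE
    exact ⟨{ n := F.n, npos := F.npos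
             phase := fun j => Function.surjInv hTf.surjective' (F.phase j)
             phase_anti := fun i j hij => hTf.strictMono'.lt_iff_lt.1 (by
               rw [Function.surjInv_eq hTf.surjective', Function.surjInv_eq hTf.surjective']
               exact F.phase_anti hij)
             obj := F.obj, obj_zero := F.obj_zero, obj_last := F.obj_last
             A := F.A
             A_mem := fun j => by
               show F.A j ∈ σ.P (f (Function.surjInv hTf.surjective' (F.phase j)))
               rw [Function.surjInv_eq hTf.surjective']
               exact F.A_mem j
             A_nonzero := F.A_nonzero, map := F.map
             distinguished := F.distinguished }⟩

private lemma gActSC_locallyFinite (σ : StabilityCondition C)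
    (T : (ℝ × ℝ) ≃ₗ[ℝ] ℝ × ℝ) (f : ℝ → ℝ) (hTf : GAdmissible T f)
    (hσ : σ.LocallyFinite C) : (gActSC σ T f hTf).LocallyFinite C := by
  obtain ⟨ε, hε, hfin⟩ := hσ
  obtain ⟨δ, hδ, hmod⟩ := hTf.modulus hε
  refine ⟨δ, hδ, fun φ => ?_⟩
  refine finiteLength_mono ?_ (hfin (f φ))
  intro X hX
  refine extClosure_mono ?_ hX
  rintro F ⟨ψ, hψ, hF⟩
  exact ⟨f ψ, hmod φ ψ hψ, hF⟩

variable (Φ : C ≌ C) [Φ.functor.CommShift ℤ] [Φ.functor.IsTriangulated]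

/-- The stability condition `Φ(σ)`. -/
private noncomputable def autActSC (σ : StabilityCondition C) : StabilityCondition C where
  Z E := σ.Z (Φ.inverse.obj E)
  P φ := {E | Φ.inverse.obj E ∈ σ.P φ}
  Z_iso_invariant X Y e := σ.Z_iso_invariant (Φ.inverse.mapIso e)
  Z_additive T hT := by
    obtain ⟨f, g, h, mem⟩ := inverse_distinguished Φ T hT
    exact σ.Z_additive _ mem
  P_isoClosed φ X Y e hX := σ.P_isoClosed φ (Φ.inverse.mapIso e) hX
  P_zero_mem φ Z₀ h0 := σ.P_zero_mem φ _ (Φ.inverse.map_isZero h0)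
  P_phase φ E hE hnz :=
    σ.P_phase φ _ hE (fun hz => hnz ((isZero_inv_iff Φ E).1 hz))
  P_shift φ E := by
    constructor
    · intro hE
      obtain ⟨F, hF, ⟨e⟩⟩ := (σ.P_shift φ _).1 hE
      refine ⟨Φ.functor.obj F, σ.P_isoClosed φ (Φ.unitIso.app F) hF, ⟨?_⟩⟩
      calc E ≅ Φ.functor.obj (Φ.inverse.obj E) := (Φ.counitIso.app E).symm
        _ ≅ Φ.functor.obj (F⟦(1 : ℤ)⟧) := Φ.functor.mapIso e
        _ ≅ (Φ.functor.obj F)⟦(1 : ℤ)⟧ := (Φ.functor.commShiftIso (1 : ℤ)).app F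
    · rintro ⟨F, hF, ⟨e⟩⟩
      apply (σ.P_shift φ _).2
      refine ⟨Φ.inverse.obj F, hF, ⟨?_⟩⟩
      calc Φ.inverse.obj E ≅ Φ.inverse.obj (F⟦(1 : ℤ)⟧) := Φ.inverse.mapIso e
        _ ≅ Φ.inverse.obj ((Φ.functor.obj (Φ.inverse.obj F))⟦(1 : ℤ)⟧) :=
          Φ.inverse.mapIso ((shiftFunctor C (1 : ℤ)).mapIso (Φ.counitIso.app F).symm)
        _ ≅ Φ.inverse.obj (Φ.functor.obj ((Φ.inverse.obj F)⟦(1 : ℤ)⟧)) :=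
          Φ.inverse.mapIso ((Φ.functor.commShiftIso (1 : ℤ)).app (Φ.inverse.obj F)).symm
        _ ≅ (Φ.inverse.obj F)⟦(1 : ℤ)⟧ := (Φ.unitIso.app _).symm
  hom_vanishing φ₁ φ₂ h12 A₁ A₂ hA₁ hA₂ f := by
    have h0 : Φ.inverse.map f = 0 := σ.hom_vanishing h12 hA₁ hA₂ _
    apply Φ.inverse.map_injective
    rw [h0, Functor.map_zero]
  HN E hE := by
    have hE' : ¬ IsZero (Φ.inverse.obj E) := fun hz => hE ((isZero_inv_iff Φ E).1 hz)
    obtain ⟨F⟩ := σ.HN _ hE'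
    refine ⟨HNFiltration.ofIso'
      ({ n := F.n, npos := F.npos, phase := F.phase, phase_anti := F.phase_anti
         obj := fun j => Φ.functor.obj (F.obj j)
         obj_zero := Φ.functor.map_isZero F.obj_zero
         obj_last := congrArg Φ.functor.obj F.obj_last
         A := fun j => Φ.functor.obj (F.A j)
         A_mem := fun j =>
           σ.P_isoClosed _ (Φ.unitIso.app (F.A j)) (F.A_mem j)
         A_nonzero := fun j hz =>
           F.A_nonzero j ((Φ.inverse.map_isZero hz).of_iso (Φ.unitIso.app (F.A j)))
         map := fun j => Φ.functor.map (F.map j)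
         distinguished := fun j => by
           obtain ⟨g, h, mem⟩ := F.distinguished j
           exact ⟨Φ.functor.map g,
             Φ.functor.map h ≫ (Φ.functor.commShiftIso (1 : ℤ)).hom.app _,
             Φ.functor.map_distinguished _ mem⟩ } :
        HNFiltration C (fun φ => {E | Φ.inverse.obj E ∈ σ.P φ})
          (Φ.functor.obj (Φ.inverse.obj E)))
      (Φ.counitIso.app E)⟩

private lemma autActSC_mem_PInterval (σ : StabilityCondition C) (I : Set ℝ) {X : C}
    (hX : X ∈ PInterval C (autActSC Φ σ) I) : Φ.inverse.obj X ∈ PInterval C σ I := by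
  induction hX with
  | of hE =>
      obtain ⟨φ, hφ, hmem⟩ := hE
      exact ExtClosure.of ⟨φ, hφ, hmem⟩
  | zero hE => exact ExtClosure.zero (Φ.inverse.map_isZero hE)
  | iso e _ ih => exact ExtClosure.iso (Φ.inverse.mapIso e) ih
  | ext T hT _ _ ih₁ ih₃ =>
      obtain ⟨f, g, h, mem⟩ := inverse_distinguished Φ T hT
      exact ExtClosure.ext (Triangle.mk f g h) mem ih₁ ih₃

private lemma autActSC_locallyFinite (σ : StabilityCondition C)
    (hσ : σ.LocallyFinite C) : (autActSC Φ σ).LocallyFinite C := by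
  obtain ⟨ε, hε, hfin⟩ := hσ
  refine ⟨ε, hε, fun φ => ?_⟩
  set I := Set.Ioo (φ - ε) (φ + ε) with hI
  constructor
  · refine Subrelation.wf
      (r := InvImage (fun A E => ProperStrictSub C (PInterval C σ I) A E)
        Φ.inverse.obj) ?_ (InvImage.wf _ (hfin φ).1)
    rintro A E ⟨hA, hE, B, f, g, hom, hB, hBnz, hdist⟩
    obtain ⟨f', g', h', mem'⟩ := inverse_distinguished Φ (Triangle.mk f g hom) hdist
    exact ⟨autActSC_mem_PInterval Φ σ I hA, autActSC_mem_PInterval Φ σ I hE,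
      Φ.inverse.obj B, f', g', h', autActSC_mem_PInterval Φ σ I hB,
      fun hz => hBnz ((isZero_inv_iff Φ B).1 hz), mem'⟩
  · refine Subrelation.wf
      (r := InvImage (fun B E => ProperStrictQuot C (PInterval C σ I) B E)
        Φ.inverse.obj) ?_ (InvImage.wf _ (hfin φ).2)
    rintro B E ⟨hB, hE, A, f, g, hom, hA, hAnz, hdist⟩
    obtain ⟨f', g', h', mem'⟩ := inverse_distinguished Φ (Triangle.mk f g hom) hdist
    exact ⟨autActSC_mem_PInterval Φ σ I hB, autActSC_mem_PInterval Φ σ I hE,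
      Φ.inverse.obj A, f', g', h', autActSC_mem_PInterval Φ σ I hA,
      fun hz => hAnz ((isZero_inv_iff Φ A).1 hz), mem'⟩

end Constructions
/-- `Stab(D)` carries a right action of the universal covering group of
`GL⁺(2,ℝ)` and a left action of the group of exact autoequivalences of `D`, and these
two actions commute.  (The actions are characterized by the predicates `IsGAct` and
`IsAutAct`; well-definedness, uniqueness, unit and compatibility laws are stated.) -/
theorem statement6 :
    -- right action of the universal cover of GL⁺(2,ℝ): well-definedness on Stab(D)
    (∀ σ : StabilityCondition C, σ.LocallyFinite C →
      ∀ (T : (ℝ × ℝ) ≃ₗ[ℝ] ℝ × ℝ) (f : ℝ → ℝ), GAdmissible T f →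
        ∃ σ' : StabilityCondition C, σ'.LocallyFinite C ∧ IsGAct C σ T f σ') ∧
    (∀ (σ σ₁ σ₂ : StabilityCondition C) (T : (ℝ × ℝ) ≃ₗ[ℝ] ℝ × ℝ) (f : ℝ → ℝ),
      IsGAct C σ T f σ₁ → IsGAct C σ T f σ₂ → σ₁ = σ₂) ∧
    -- unit law
    (∀ σ σ' : StabilityCondition C,
      IsGAct C σ (LinearEquiv.refl ℝ (ℝ × ℝ)) id σ' → σ' = σ) ∧
    -- right action compatibility: σ·(g₁g₂) = (σ·g₁)·g₂ where g₁g₂ = (T₁ ∘ T₂, f₁ ∘ f₂)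
    (∀ (σ σ₁ σ₂ : StabilityCondition C) (T₁ T₂ : (ℝ × ℝ) ≃ₗ[ℝ] ℝ × ℝ) (f₁ f₂ : ℝ → ℝ),
      GAdmissible T₁ f₁ → GAdmissible T₂ f₂ →
      IsGAct C σ T₁ f₁ σ₁ → IsGAct C σ₁ T₂ f₂ σ₂ →
        IsGAct C σ (T₂.trans T₁) (f₁ ∘ f₂) σ₂) ∧
    -- left action of exact autoequivalences: well-definedness on Stab(D)
    (∀ σ : StabilityCondition C, σ.LocallyFinite C →
      ∀ (Φ : C ≌ C) [Φ.functor.CommShift ℤ] [Φ.functor.IsTriangulated],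
        ∃ σ' : StabilityCondition C, σ'.LocallyFinite C ∧ IsAutAct C σ Φ σ') ∧
    (∀ (σ σ₁ σ₂ : StabilityCondition C) (Φ : C ≌ C),
      IsAutAct C σ Φ σ₁ → IsAutAct C σ Φ σ₂ → σ₁ = σ₂) ∧
    -- unit law
    (∀ σ σ' : StabilityCondition C, IsAutAct C σ (CategoryTheory.Equivalence.refl (C := C)) σ' → σ' = σ) ∧
    -- left action compatibility: (Φ₁ ∘ Φ₂)(σ) = Φ₁(Φ₂(σ))
    (∀ (σ σ₁ σ₂ : StabilityCondition C) (Φ₁ Φ₂ : C ≌ C),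
      IsAutAct C σ Φ₂ σ₁ → IsAutAct C σ₁ Φ₁ σ₂ → IsAutAct C σ (Φ₂.trans Φ₁) σ₂) ∧
    -- the two actions commute
    (∀ (σ σ₁ σ₂ σ₃ σ₄ : StabilityCondition C) (T : (ℝ × ℝ) ≃ₗ[ℝ] ℝ × ℝ) (f : ℝ → ℝ)
      (Φ : C ≌ C),
      IsGAct C σ T f σ₁ → IsAutAct C σ₁ Φ σ₂ →
      IsAutAct C σ Φ σ₃ → IsGAct C σ₃ T f σ₄ → σ₂ = σ₄) := by
  refine ⟨?_, ?_, ?_, ?_, ?_, ?_, ?_, ?_, ?_⟩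
  · -- existence for the G-action
    intro σ hσ T f hTf
    exact ⟨gActSC σ T f hTf, gActSC_locallyFinite σ T f hTf hσ,
      fun E => rfl, fun φ => rfl⟩
  · -- uniqueness for the G-action
    intro σ σ₁ σ₂ T f h1 h2
    refine StabilityCondition.ext' ?_ ?_
    · funext E; rw [h1.1 E, ← h2.1 E]
    · funext φ; rw [h1.2 φ, ← h2.2 φ]
  · -- unit law for the G-action
    intro σ σ' h
    refine StabilityCondition.ext' ?_ ?_
    · funext E
      rw [h.1 E]
      exact Complex.equivRealProdLm.symm_apply_apply (σ.Z E)
    · funext φ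
      exact h.2 φ
  · -- compatibility for the G-action
    intro σ σ₁ σ₂ T₁ T₂ f₁ f₂ _ _ h1 h2
    constructor
    · intro E
      rw [h2.1 E, h1.1 E]
      simp
    · intro φ
      rw [h2.2 φ, h1.2 (f₂ φ)]
      rfl
  · -- existence for the autoequivalence action
    intro σ hσ Φ _ _
    exact ⟨autActSC Φ σ, autActSC_locallyFinite Φ σ hσ,
      fun E => rfl, fun φ E => Iff.rfl⟩
  · -- uniqueness for the autoequivalence action
    intro σ σ₁ σ₂ Φ h1 h2
    refine StabilityCondition.ext' ?_ ?_
    · funext E; rw [h1.1 E, ← h2.1 E]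
    · funext φ
      ext E
      rw [h1.2 φ E, ← h2.2 φ E]
  · -- unit law for the autoequivalence action
    intro σ σ' h
    refine StabilityCondition.ext' ?_ ?_
    · funext E; exact h.1 E
    · funext φ
      ext E
      exact h.2 φ E
  · -- compatibility for the autoequivalence action
    intro σ σ₁ σ₂ Φ₁ Φ₂ h1 h2
    constructor
    · intro E
      rw [h2.1 E, h1.1 (Φ₁.inverse.obj E)]
      rfl
    · intro φ E
      rw [h2.2 φ E, h1.2 φ (Φ₁.inverse.obj E)]
      rfl
  · -- the two actions commute
    intro σ σ₁ σ₂ σ₃ σ₄ T f Φ hG1 hA2 hA3 hG4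
    refine StabilityCondition.ext' ?_ ?_
    · funext E
      rw [hA2.1 E, hG1.1 (Φ.inverse.obj E), hG4.1 E, hA3.1 E]
    · funext φ
      ext E
      rw [hA2.2 φ E, hG1.2 φ, hG4.2 φ]
      constructor
      · intro hmem
        exact ((hA3.2 (f φ) E).2 hmem)
      · intro hmem
        exact ((hA3.2 (f φ) E).1 hmem)
end
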